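/- arXiv:0907.1316 — 10 statements merged into one kernel-verified Lean document; each statement's English description precedes it below -/
import Mathlib

section
/- Let g : [0,∞) → [0,∞) be a nonincreasing function. Then for all t > 0 and λ > 0: (1 − e^{−2t/λ}) · ∫₀^∞ e^{−2s/λ} g(s) ds ≤ ∫₀^t g(s) ds ≤ e^{2t/λ} · ∫₀^∞ e^{−2s/λ} g(s) ds. -/
open MeasureTheory Set Filter
open scoped ENNReal

/-- For a nonincreasing `g : [0,∞) → [0,∞]` and all `t, λ > 0`,
`(1 − e^{−2t/λ}) ∫₀^∞ e^{−2s/λ} g(s) ds ≤ ∫₀^t g(s) ds ≤ e^{2t/λ} ∫₀^∞ e^{−2s/λ} g(s) ds`. -/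
theorem stmt_0 (g : ℝ → ℝ≥0∞) (hg : AntitoneOn g (Set.Ici (0 : ℝ))) :
    ∀ t > (0 : ℝ), ∀ l > (0 : ℝ),
      (ENNReal.ofReal (1 - Real.exp (-2 * t / l)) *
          ∫⁻ s in Set.Ioi (0 : ℝ), ENNReal.ofReal (Real.exp (-2 * s / l)) * g s ≤
        ∫⁻ s in Set.Ioc (0 : ℝ) t, g s) ∧
      (∫⁻ s in Set.Ioc (0 : ℝ) t, g s ≤
        ENNReal.ofReal (Real.exp (2 * t / l)) *
          ∫⁻ s in Set.Ioi (0 : ℝ), ENNReal.ofReal (Real.exp (-2 * s / l)) * g s) := by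
  intro t ht l hl
  set r : ℝ := Real.exp (-2 * t / l) with hr
  have hr0 : 0 < r := Real.exp_pos _
  have hr1 : r < 1 := by
    rw [hr]
    apply Real.exp_lt_one_iff.mpr
    apply div_neg_of_neg_of_pos (by linarith) hl
  -- translation
  have htrans : ∀ n : ℕ, (∫⁻ s in Ioc ((n : ℝ) * t) (((n : ℝ) + 1) * t), g (s - n * t)) =
      ∫⁻ s in Ioc (0 : ℝ) t, g s := by
    intro n
    have hmp : MeasurePreserving (fun x : ℝ => x + n * t) volume volume :=
      measurePreserving_add_right volume _
    have hemb : MeasurableEmbedding (fun x : ℝ => x + n * t) :=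
      measurableEmbedding_addRight _
    have hpre : (fun x : ℝ => x + n * t) ⁻¹' Ioc ((n : ℝ) * t) (((n : ℝ) + 1) * t)
        = Ioc (0 : ℝ) t := by
      ext x
      simp only [mem_preimage, mem_Ioc]
      constructor <;> intro h <;> constructor <;> nlinarith [h.1, h.2]
    have := hmp.setLIntegral_comp_preimage_emb hemb (fun y => g (y - n * t))
      (Ioc ((n : ℝ) * t) (((n : ℝ) + 1) * t))
    rw [hpre] at this
    simp only [add_sub_cancel_right] at this
    exact this.symm
  -- union decomposition
  have hunion : Ioi (0 : ℝ) = ⋃ n : ℕ, Ioc ((n : ℝ) * t) (((n : ℝ) + 1) * t) := by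
    ext x
    simp only [mem_Ioi, mem_iUnion, mem_Ioc]
    constructor
    · intro hx
      refine ⟨⌈x / t⌉₊ - 1, ?_, ?_⟩
      · have h1 : 1 ≤ ⌈x / t⌉₊ := Nat.one_le_ceil_iff.mpr (div_pos hx ht)
        have hc : (⌈x / t⌉₊ : ℝ) < x / t + 1 := Nat.ceil_lt_add_one (le_of_lt (div_pos hx ht))
        rw [Nat.cast_sub h1]
        push_cast
        have : ((⌈x / t⌉₊ : ℝ) - 1) < x / t := by linarith
        calc ((⌈x / t⌉₊ : ℝ) - 1) * t < (x / t) * t := by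
              apply mul_lt_mul_of_pos_right this ht
          _ = x := by field_simp
      · have hc2 : x / t ≤ (⌈x / t⌉₊ : ℝ) := Nat.le_ceil _
        have h1 : 1 ≤ ⌈x / t⌉₊ := Nat.one_le_ceil_iff.mpr (div_pos hx ht)
        rw [Nat.cast_sub h1]
        push_cast
        have : x / t * t ≤ (⌈x / t⌉₊ : ℝ) * t := mul_le_mul_of_nonneg_right hc2 ht.le
        rw [div_mul_cancel₀ x ht.ne'] at this
        linarith
    · rintro ⟨n, h1, _⟩
      have : (0 : ℝ) ≤ (n : ℝ) * t := by positivity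
      linarith
  have hdisj : Pairwise (Function.onFun Disjoint
      fun n : ℕ => Ioc ((n : ℝ) * t) (((n : ℝ) + 1) * t)) := by
    intro i j hij
    rw [Function.onFun, Set.Ioc_disjoint_Ioc]
    rcases hij.lt_or_gt with h | h
    · have hij' : (i : ℝ) + 1 ≤ (j : ℝ) := by exact_mod_cast h
      calc min (((i : ℝ) + 1) * t) (((j : ℝ) + 1) * t) ≤ ((i : ℝ) + 1) * t :=
            min_le_left _ _
        _ ≤ (j : ℝ) * t := mul_le_mul_of_nonneg_right hij' ht.le
        _ ≤ max ((i : ℝ) * t) ((j : ℝ) * t) := le_max_right _ _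
    · have hij' : (j : ℝ) + 1 ≤ (i : ℝ) := by exact_mod_cast h
      calc min (((i : ℝ) + 1) * t) (((j : ℝ) + 1) * t) ≤ ((j : ℝ) + 1) * t :=
            min_le_right _ _
        _ ≤ (i : ℝ) * t := mul_le_mul_of_nonneg_right hij' ht.le
        _ ≤ max ((i : ℝ) * t) ((j : ℝ) * t) := le_max_left _ _
  -- piece bound
  have hpiece : ∀ n : ℕ,
      (∫⁻ s in Ioc ((n : ℝ) * t) (((n : ℝ) + 1) * t),
        ENNReal.ofReal (Real.exp (-2 * s / l)) * g s)
      ≤ ENNReal.ofReal r ^ n * ∫⁻ s in Ioc (0 : ℝ) t, g s := by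
    intro n
    rw [← htrans n, ← lintegral_const_mul' _ _ (by simp : (ENNReal.ofReal r ^ n) ≠ ∞)]
    apply setLIntegral_mono' measurableSet_Ioc
    intro s hs
    have hs1 : (n : ℝ) * t < s := hs.1
    have hnt : (0 : ℝ) ≤ (n : ℝ) * t := by positivity
    have hgle : g s ≤ g (s - (n : ℝ) * t) := by
      apply hg (mem_Ici.mpr (by linarith)) (mem_Ici.mpr (by linarith)) (by linarith)
    have hexp : Real.exp (-2 * s / l) ≤ r ^ n := by
      rw [hr, ← Real.exp_nat_mul]
      apply Real.exp_le_exp.mpr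
      have : (n : ℝ) * (-2 * t / l) = -2 * ((n : ℝ) * t) / l := by ring
      rw [this, div_le_div_iff₀ hl hl]
      nlinarith
    calc ENNReal.ofReal (Real.exp (-2 * s / l)) * g s
        ≤ ENNReal.ofReal (r ^ n) * g (s - (n : ℝ) * t) :=
          mul_le_mul' (ENNReal.ofReal_le_ofReal hexp) hgle
      _ = ENNReal.ofReal r ^ n * g (s - (n : ℝ) * t) := by
          rw [ENNReal.ofReal_pow hr0.le]
  constructor
  · -- lower bound
    have hsplit : (∫⁻ s in Ioi (0 : ℝ), ENNReal.ofReal (Real.exp (-2 * s / l)) * g s)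
        = ∑' n : ℕ, ∫⁻ s in Ioc ((n : ℝ) * t) (((n : ℝ) + 1) * t),
            ENNReal.ofReal (Real.exp (-2 * s / l)) * g s := by
      rw [hunion]
      exact lintegral_iUnion (fun n => measurableSet_Ioc) hdisj _
    have hsum : (∫⁻ s in Ioi (0 : ℝ), ENNReal.ofReal (Real.exp (-2 * s / l)) * g s)
        ≤ (1 - ENNReal.ofReal r)⁻¹ * ∫⁻ s in Ioc (0 : ℝ) t, g s := by
      rw [hsplit]
      calc (∑' n : ℕ, ∫⁻ s in Ioc ((n : ℝ) * t) (((n : ℝ) + 1) * t),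
              ENNReal.ofReal (Real.exp (-2 * s / l)) * g s)
          ≤ ∑' n : ℕ, ENNReal.ofReal r ^ n * ∫⁻ s in Ioc (0 : ℝ) t, g s :=
            ENNReal.tsum_le_tsum hpiece
        _ = (∑' n : ℕ, ENNReal.ofReal r ^ n) * ∫⁻ s in Ioc (0 : ℝ) t, g s :=
            ENNReal.tsum_mul_right
        _ = (1 - ENNReal.ofReal r)⁻¹ * ∫⁻ s in Ioc (0 : ℝ) t, g s := by
            rw [ENNReal.tsum_geometric]
    have hofr : ENNReal.ofReal (1 - r) = 1 - ENNReal.ofReal r := by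
      rw [ENNReal.ofReal_sub _ hr0.le, ENNReal.ofReal_one]
    have hne0 : (1 : ℝ≥0∞) - ENNReal.ofReal r ≠ 0 := by
      rw [Ne, tsub_eq_zero_iff_le, not_le]
      exact ENNReal.ofReal_lt_one.mpr hr1
    have hnetop : (1 : ℝ≥0∞) - ENNReal.ofReal r ≠ ⊤ := by
      exact ne_top_of_le_ne_top ENNReal.one_ne_top tsub_le_self
    calc ENNReal.ofReal (1 - r) *
          ∫⁻ s in Ioi (0 : ℝ), ENNReal.ofReal (Real.exp (-2 * s / l)) * g s
        ≤ ENNReal.ofReal (1 - r) *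
          ((1 - ENNReal.ofReal r)⁻¹ * ∫⁻ s in Ioc (0 : ℝ) t, g s) :=
          mul_le_mul_right hsum _
      _ = ((1 - ENNReal.ofReal r) * (1 - ENNReal.ofReal r)⁻¹) *
            ∫⁻ s in Ioc (0 : ℝ) t, g s := by rw [hofr, mul_assoc]
      _ = ∫⁻ s in Ioc (0 : ℝ) t, g s := by
          rw [ENNReal.mul_inv_cancel hne0 hnetop, one_mul]
  · -- upper bound
    calc (∫⁻ s in Ioc (0 : ℝ) t, g s)
        ≤ ∫⁻ s in Ioc (0 : ℝ) t,
            ENNReal.ofReal (Real.exp (2 * t / l)) *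
              (ENNReal.ofReal (Real.exp (-2 * s / l)) * g s) := by
          apply setLIntegral_mono' measurableSet_Ioc
          intro s hs
          have h1 : (1 : ℝ) ≤ Real.exp (2 * t / l) * Real.exp (-2 * s / l) := by
            rw [← Real.exp_add]
            apply Real.one_le_exp
            have : 2 * t / l + -2 * s / l = 2 * (t - s) / l := by ring
            rw [this]
            exact div_nonneg (by linarith [hs.2]) hl.le
          calc g s = 1 * g s := (one_mul _).symm
            _ ≤ (ENNReal.ofReal (Real.exp (2 * t / l)) *
                  ENNReal.ofReal (Real.exp (-2 * s / l))) * g s := by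
                apply mul_le_mul_left
                rw [← ENNReal.ofReal_mul (Real.exp_pos _).le, ← ENNReal.ofReal_one]
                exact ENNReal.ofReal_le_ofReal h1
            _ = ENNReal.ofReal (Real.exp (2 * t / l)) *
                  (ENNReal.ofReal (Real.exp (-2 * s / l)) * g s) := by rw [mul_assoc]
      _ = ENNReal.ofReal (Real.exp (2 * t / l)) *
            ∫⁻ s in Ioc (0 : ℝ) t, ENNReal.ofReal (Real.exp (-2 * s / l)) * g s :=
          lintegral_const_mul' _ _ (by simp)
      _ ≤ ENNReal.ofReal (Real.exp (2 * t / l)) *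
            ∫⁻ s in Ioi (0 : ℝ), ENNReal.ofReal (Real.exp (-2 * s / l)) * g s := by
          apply mul_le_mul_right
          exact lintegral_mono_set (fun x hx => mem_Ioi.mpr hx.1)
end

section
/- Let h : [0,∞) → [0,∞) be a nonincreasing function. Then for all α > 0 and t > 0: (1 − e^{−tα}) · ∫₀^∞ e^{−2αs} h(s) ds ≤ ∫₀^t e^{−αs} h(s) ds ≤ e^{tα} · ∫₀^∞ e^{−2αs} h(s) ds. -/
open MeasureTheory Set Filter
open scoped ENNReal

theorem aux_union (t : ℝ) (ht : 0 < t) :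
    Set.Ioi (0:ℝ) = ⋃ n : ℕ, Set.Ioc ((n:ℝ)*t) (((n:ℝ)+1)*t) := by
  ext x
  simp only [mem_Ioi, mem_iUnion, mem_Ioc]
  constructor
  · intro hx
    have hex : ∃ n : ℕ, x ≤ ((n:ℝ)+1)*t := by
      obtain ⟨n, hn⟩ := exists_nat_gt (x / t)
      exact ⟨n, by nlinarith [(div_lt_iff₀ ht).mp hn]⟩
    classical
    refine ⟨Nat.find hex, ?_, Nat.find_spec hex⟩
    rcases Nat.eq_zero_or_pos (Nat.find hex) with h0 | hpos
    · simpa [h0] using hx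
    · have h1 := Nat.find_min hex (Nat.pred_lt hpos.ne')
      push_neg at h1
      have h2 : ((Nat.find hex : ℝ)) = ((Nat.find hex).pred : ℝ) + 1 := by
        exact_mod_cast (Nat.succ_pred_eq_of_pos hpos).symm
      rw [h2]; exact h1
  · rintro ⟨n, hn, -⟩
    have : (0:ℝ) ≤ (n:ℝ)*t := by positivity
    linarith

theorem aux_translate (f : ℝ → ℝ≥0∞) (c : ℝ) (a b : ℝ) :
    ∫⁻ s in Set.Ioc (a + c) (b + c), f s = ∫⁻ u in Set.Ioc a b, f (u + c) := by
  rw [← (measurePreserving_add_right volume c).setLIntegral_comp_preimage_emb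
      (measurableEmbedding_addRight c)]
  congr 1
  ext x
  simp [mem_preimage]

/-- For a nonincreasing `h : [0,∞) → [0,∞]` and all `α, t > 0`,
`(1 − e^{−tα}) ∫₀^∞ e^{−2αs} h(s) ds ≤ ∫₀^t e^{−αs} h(s) ds ≤ e^{tα} ∫₀^∞ e^{−2αs} h(s) ds`. -/
theorem stmt_1 (h : ℝ → ℝ≥0∞) (hh : AntitoneOn h (Set.Ici (0 : ℝ))) :
    ∀ α > (0 : ℝ), ∀ t > (0 : ℝ),
      (ENNReal.ofReal (1 - Real.exp (-(t * α))) *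
          ∫⁻ s in Set.Ioi (0 : ℝ), ENNReal.ofReal (Real.exp (-(2 * α * s))) * h s ≤
        ∫⁻ s in Set.Ioc (0 : ℝ) t, ENNReal.ofReal (Real.exp (-(α * s))) * h s) ∧
      (∫⁻ s in Set.Ioc (0 : ℝ) t, ENNReal.ofReal (Real.exp (-(α * s))) * h s ≤
        ENNReal.ofReal (Real.exp (t * α)) *
          ∫⁻ s in Set.Ioi (0 : ℝ), ENNReal.ofReal (Real.exp (-(2 * α * s))) * h s) := by
  intro α hα t ht
  set g : ℝ → ℝ≥0∞ := fun s => ENNReal.ofReal (Real.exp (-(2 * α * s))) * h s with hg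
  set J : ℝ≥0∞ := ∫⁻ s in Set.Ioi (0 : ℝ), g s with hJdef
  set I : ℝ≥0∞ := ∫⁻ s in Set.Ioc (0 : ℝ) t, ENNReal.ofReal (Real.exp (-(α * s))) * h s
    with hIdef
  set c : ℝ≥0∞ := ENNReal.ofReal (Real.exp (-(2 * α * t))) with hc
  -- geometric bound: J ≤ (1 - c)⁻¹ * I
  have hterm : ∀ n : ℕ, (∫⁻ s in Set.Ioc ((n:ℝ)*t) (((n:ℝ)+1)*t), g s) ≤ c ^ n * I := by
    intro n
    have htr : (∫⁻ s in Set.Ioc ((n:ℝ)*t) (((n:ℝ)+1)*t), g s)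
        = ∫⁻ u in Set.Ioc (0:ℝ) t, g (u + (n:ℝ)*t) := by
      have : Set.Ioc ((n:ℝ)*t) (((n:ℝ)+1)*t) = Set.Ioc (0 + (n:ℝ)*t) (t + (n:ℝ)*t) := by
        congr 1 <;> ring
      rw [this, aux_translate]
    rw [htr]
    have hcn : c ^ n = ENNReal.ofReal (Real.exp ((n:ℝ) * (-(2 * α * t)))) := by
      rw [Real.exp_nat_mul, hc, ← ENNReal.ofReal_pow (Real.exp_nonneg _)]
    calc (∫⁻ u in Set.Ioc (0:ℝ) t, g (u + (n:ℝ)*t))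
        ≤ ∫⁻ u in Set.Ioc (0:ℝ) t,
            c ^ n * (ENNReal.ofReal (Real.exp (-(α * u))) * h u) := by
          apply setLIntegral_mono' measurableSet_Ioc
          intro u hu
          have hu0 : 0 < u := hu.1
          have hnt : (0:ℝ) ≤ (n:ℝ)*t := by positivity
          have hhle : h (u + (n:ℝ)*t) ≤ h u :=
            hh (le_of_lt hu0) (by simp only [mem_Ici]; linarith) (by linarith)
          have hexp : ENNReal.ofReal (Real.exp (-(2 * α * (u + (n:ℝ)*t))))
              ≤ c ^ n * ENNReal.ofReal (Real.exp (-(α * u))) := by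
            rw [hcn, ← ENNReal.ofReal_mul (Real.exp_nonneg _), ← Real.exp_add]
            apply ENNReal.ofReal_le_ofReal
            apply Real.exp_le_exp.2
            nlinarith
          calc g (u + (n:ℝ)*t)
              = ENNReal.ofReal (Real.exp (-(2 * α * (u + (n:ℝ)*t)))) * h (u + (n:ℝ)*t) := rfl
            _ ≤ (c ^ n * ENNReal.ofReal (Real.exp (-(α * u)))) * h u := mul_le_mul' hexp hhle
            _ = c ^ n * (ENNReal.ofReal (Real.exp (-(α * u))) * h u) := mul_assoc _ _ _
      _ = c ^ n * I := by
          rw [hIdef]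
          exact lintegral_const_mul' _ _ (ENNReal.pow_ne_top ENNReal.ofReal_ne_top)
  have hJ : J ≤ (1 - c)⁻¹ * I := by
    have hmeas : ∀ n : ℕ, MeasurableSet (Set.Ioc ((n:ℝ)*t) (((n:ℝ)+1)*t)) :=
      fun n => measurableSet_Ioc
    have hdisj : Pairwise (Function.onFun Disjoint
        fun n : ℕ => Set.Ioc ((n:ℝ)*t) (((n:ℝ)+1)*t)) := by
      intro m n hmn
      apply Set.Ioc_disjoint_Ioc.2
      rcases lt_or_gt_of_ne hmn with hlt | hlt
      · have : ((m:ℝ)+1) ≤ (n:ℝ) := by exact_mod_cast hlt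
        calc min (((m:ℝ)+1)*t) (((n:ℝ)+1)*t) ≤ ((m:ℝ)+1)*t := min_le_left _ _
          _ ≤ (n:ℝ)*t := by nlinarith
          _ ≤ max ((m:ℝ)*t) ((n:ℝ)*t) := le_max_right _ _
      · have : ((n:ℝ)+1) ≤ (m:ℝ) := by exact_mod_cast hlt
        calc min (((m:ℝ)+1)*t) (((n:ℝ)+1)*t) ≤ ((n:ℝ)+1)*t := min_le_right _ _
          _ ≤ (m:ℝ)*t := by nlinarith
          _ ≤ max ((m:ℝ)*t) ((n:ℝ)*t) := le_max_left _ _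
    calc J = ∑' n : ℕ, ∫⁻ s in Set.Ioc ((n:ℝ)*t) (((n:ℝ)+1)*t), g s := by
          rw [hJdef, aux_union t ht, lintegral_iUnion hmeas hdisj]
      _ ≤ ∑' n : ℕ, c ^ n * I := ENNReal.tsum_le_tsum hterm
      _ = (∑' n : ℕ, c ^ n) * I := ENNReal.tsum_mul_right
      _ = (1 - c)⁻¹ * I := by rw [ENNReal.tsum_geometric]
  constructor
  · -- lower bound
    have hc1 : c < 1 := by
      rw [hc]
      exact ENNReal.ofReal_lt_one.2 (Real.exp_lt_one_iff.2 (by nlinarith))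
    have h0 : (1 - c) ≠ 0 := (tsub_pos_of_lt hc1).ne'
    have htop : (1 - c) ≠ ∞ := (tsub_le_self.trans_lt ENNReal.one_lt_top).ne
    have ha : ENNReal.ofReal (1 - Real.exp (-(t * α))) ≤ 1 - c := by
      rw [ENNReal.ofReal_sub _ (Real.exp_nonneg _), hc, ENNReal.ofReal_one]
      exact tsub_le_tsub_left
        (ENNReal.ofReal_le_ofReal (Real.exp_le_exp.2 (by nlinarith))) 1
    calc ENNReal.ofReal (1 - Real.exp (-(t * α))) * J
        ≤ ENNReal.ofReal (1 - Real.exp (-(t * α))) * ((1 - c)⁻¹ * I) :=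
          mul_le_mul_right hJ _
      _ = (ENNReal.ofReal (1 - Real.exp (-(t * α))) * (1 - c)⁻¹) * I :=
          (mul_assoc _ _ _).symm
      _ ≤ 1 * I := by
          apply mul_le_mul_left
          calc ENNReal.ofReal (1 - Real.exp (-(t * α))) * (1 - c)⁻¹
              ≤ (1 - c) * (1 - c)⁻¹ := mul_le_mul_left ha _
            _ = 1 := ENNReal.mul_inv_cancel h0 htop
      _ = I := one_mul I
  · -- upper bound
    calc I ≤ ∫⁻ s in Set.Ioc (0:ℝ) t, ENNReal.ofReal (Real.exp (t * α)) * g s := by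
          apply setLIntegral_mono' measurableSet_Ioc
          intro s hs
          rw [hg]
          simp only
          rw [← mul_assoc, ← ENNReal.ofReal_mul (Real.exp_nonneg _), ← Real.exp_add]
          apply mul_le_mul_left
          apply ENNReal.ofReal_le_ofReal
          apply Real.exp_le_exp.2
          nlinarith [hs.1, hs.2]
      _ = ENNReal.ofReal (Real.exp (t * α)) * ∫⁻ s in Set.Ioc (0:ℝ) t, g s :=
          lintegral_const_mul' _ _ ENNReal.ofReal_ne_top
      _ ≤ ENNReal.ofReal (Real.exp (t * α)) * J :=
          mul_le_mul_right (lintegral_mono_set Set.Ioc_subset_Ioi_self) _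
end

section
/- Let f, g : [0,∞) → [0,∞) be nondecreasing functions such that f(s) ≤ g(s) for all s ≥ 0 and g is subadditive: g(t+s) ≤ g(t) + g(s) for all s, t ≥ 0. Then for every α > 0: ∫₀^∞ e^{−r} f(r/α) dr ≤ e·(α + 2/α) · ∫₀^∞ e^{−r} g(r) dr. -/
open MeasureTheory Set Filter
open scoped ENNReal

lemma aux_subadd (g : ℝ → ℝ≥0∞)
    (hsub : ∀ s ≥ (0 : ℝ), ∀ t ≥ (0 : ℝ), g (t + s) ≤ g t + g s) :
    ∀ n : ℕ, ∀ r ≥ (0 : ℝ), g (((n : ℝ) + 1) * r) ≤ ((n : ℕ) + 1 : ℝ≥0∞) * g r := by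
  intro n
  induction n with
  | zero => intro r hr; simp
  | succ n ih =>
    intro r hr
    have h1 : (((n + 1 : ℕ) : ℝ) + 1) * r = ((n : ℝ) + 1) * r + r := by push_cast; ring
    have h2 : ((n : ℝ) + 1) * r ≥ 0 := by positivity
    calc g ((((n + 1 : ℕ) : ℝ) + 1) * r) = g (((n : ℝ) + 1) * r + r) := by rw [h1]
      _ ≤ g (((n : ℝ) + 1) * r) + g r := hsub r hr _ h2
      _ ≤ ((n : ℕ) + 1 : ℝ≥0∞) * g r + g r := add_le_add_left (ih r hr) _
      _ = ((n + 1 : ℕ) + 1 : ℝ≥0∞) * g r := by push_cast; ring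

/-- if `f ≤ g` are nondecreasing on `[0,∞)` and `g` is subadditive, then
`∫₀^∞ e^{−r} f(r/α) dr ≤ e (α + 2/α) ∫₀^∞ e^{−r} g(r) dr` for every `α > 0`. -/
theorem stmt_5 (f g : ℝ → ℝ≥0∞)
    (hf : MonotoneOn f (Set.Ici (0 : ℝ))) (hg : MonotoneOn g (Set.Ici (0 : ℝ)))
    (hfg : ∀ s ≥ (0 : ℝ), f s ≤ g s)
    (hsub : ∀ s ≥ (0 : ℝ), ∀ t ≥ (0 : ℝ), g (t + s) ≤ g t + g s) :
    ∀ α > (0 : ℝ),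
      ∫⁻ r in Set.Ioi (0 : ℝ), ENNReal.ofReal (Real.exp (-r)) * f (r / α) ≤
        ENNReal.ofReal (Real.exp 1 * (α + 2 / α)) *
          ∫⁻ r in Set.Ioi (0 : ℝ), ENNReal.ofReal (Real.exp (-r)) * g r := by
  intro α hα
  have hexp : (1 : ℝ) ≤ Real.exp 1 := Real.one_le_exp (by norm_num)
  rcases le_or_gt 1 α with h1 | h1
  · -- α ≥ 1 : pointwise f (r/α) ≤ g r
    have hmono : ∫⁻ r in Set.Ioi (0 : ℝ), ENNReal.ofReal (Real.exp (-r)) * f (r / α) ≤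
        ∫⁻ r in Set.Ioi (0 : ℝ), ENNReal.ofReal (Real.exp (-r)) * g r := by
      refine setLIntegral_mono' measurableSet_Ioi (fun r hr => ?_)
      have hr0 : (0 : ℝ) ≤ r := le_of_lt hr
      have hdiv : (0 : ℝ) ≤ r / α := by positivity
      refine mul_le_mul_right ((hfg _ hdiv).trans (hg hdiv hr0 (div_le_self hr0 h1))) _
    refine hmono.trans (le_mul_of_one_le_left (zero_le (a := _)) ?_)
    rw [ENNReal.one_le_ofReal]
    nlinarith [div_pos (by norm_num : (0:ℝ) < 2) hα]
  · -- α < 1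
    set n : ℕ := ⌈1 / α⌉₊ with hn
    have hn1 : 1 ≤ n := Nat.one_le_ceil_iff.mpr (by positivity)
    obtain ⟨m, hm⟩ : ∃ m, n = m + 1 := ⟨n - 1, (Nat.succ_pred_eq_of_pos hn1).symm⟩
    have key : ∀ r > (0 : ℝ),
        ENNReal.ofReal (Real.exp (-r)) * f (r / α) ≤
          (n : ℝ≥0∞) * (ENNReal.ofReal (Real.exp (-r)) * g r) := by
      intro r hr
      have hr0 : (0 : ℝ) ≤ r := le_of_lt hr
      have hdiv : (0 : ℝ) ≤ r / α := by positivity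
      have hle : r / α ≤ (n : ℝ) * r := by
        have : (1 : ℝ) / α ≤ n := Nat.le_ceil _
        rw [div_eq_mul_inv]
        calc r * α⁻¹ = (1 / α) * r := by ring
          _ ≤ (n : ℝ) * r := by nlinarith
      have hg1 : f (r / α) ≤ g ((n : ℝ) * r) :=
        (hfg _ hdiv).trans (hg hdiv (Set.mem_Ici.mpr (by positivity)) hle)
      have hg2 : g ((n : ℝ) * r) ≤ (n : ℝ≥0∞) * g r := by
        have := aux_subadd g hsub m r hr0
        rw [hm]; push_cast
        convert this using 3 <;> push_cast <;> ring
      calc ENNReal.ofReal (Real.exp (-r)) * f (r / α)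
          ≤ ENNReal.ofReal (Real.exp (-r)) * ((n : ℝ≥0∞) * g r) :=
            mul_le_mul_right (hg1.trans hg2) _
        _ = (n : ℝ≥0∞) * (ENNReal.ofReal (Real.exp (-r)) * g r) := by ring
    calc ∫⁻ r in Set.Ioi (0 : ℝ), ENNReal.ofReal (Real.exp (-r)) * f (r / α)
        ≤ ∫⁻ r in Set.Ioi (0 : ℝ), (n : ℝ≥0∞) * (ENNReal.ofReal (Real.exp (-r)) * g r) :=
          setLIntegral_mono' measurableSet_Ioi (fun r hr => key r hr)
      _ = (n : ℝ≥0∞) * ∫⁻ r in Set.Ioi (0 : ℝ), ENNReal.ofReal (Real.exp (-r)) * g r :=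
          lintegral_const_mul' _ _ (by simp)
      _ ≤ ENNReal.ofReal (Real.exp 1 * (α + 2 / α)) *
          ∫⁻ r in Set.Ioi (0 : ℝ), ENNReal.ofReal (Real.exp (-r)) * g r := by
          refine mul_le_mul_left ?_ _
          rw [← ENNReal.ofReal_natCast n]
          refine ENNReal.ofReal_le_ofReal ?_
          have hceil : (n : ℝ) < 1 / α + 1 := Nat.ceil_lt_add_one (by positivity)
          have h2 : 1 / α + 1 ≤ 2 / α := by
            have ha : (1 : ℝ) < 1 / α := one_lt_one_div hα h1
            have hb : (2 : ℝ) / α = 1 / α + 1 / α := by ring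
            linarith
          have h3 : 2 / α ≤ Real.exp 1 * (α + 2 / α) := by
            nlinarith [div_pos (by norm_num : (0:ℝ) < 2) hα]
          linarith
end

section
/- Let g : (0,∞) → [0,∞) be a nonincreasing function, and let α > 0 and t > 0. Then ∫_t^∞ e^{−αs} g(s) ds ≤ [e^{−tα}/(1 − e^{−tα})] · ∫₀^t e^{−αs} g(s) ds. -/
open MeasureTheory Set Filter
open scoped ENNReal

/-- for nonincreasing `g : (0,∞) → [0,∞]` and `α, t > 0`,
`∫_t^∞ e^{−αs} g(s) ds ≤ [e^{−tα}/(1 − e^{−tα})] ∫₀^t e^{−αs} g(s) ds`. -/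
theorem stmt_8 (g : ℝ → ℝ≥0∞) (hg : AntitoneOn g (Set.Ioi (0 : ℝ)))
    (α t : ℝ) (hα : 0 < α) (ht : 0 < t) :
    ∫⁻ s in Set.Ioi t, ENNReal.ofReal (Real.exp (-(α * s))) * g s ≤
      ENNReal.ofReal (Real.exp (-(t * α)) / (1 - Real.exp (-(t * α)))) *
        ∫⁻ s in Set.Ioc (0 : ℝ) t, ENNReal.ofReal (Real.exp (-(α * s))) * g s := by
  set F : ℝ → ℝ≥0∞ := fun s => ENNReal.ofReal (Real.exp (-(α * s))) * g s with hF
  set r : ℝ := Real.exp (-(α * t)) with hr_def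
  have hr0 : 0 < r := Real.exp_pos _
  have hr1 : r < 1 := by
    rw [hr_def, Real.exp_lt_one_iff]
    nlinarith
  set I : ℝ≥0∞ := ∫⁻ s in Set.Ioc (0 : ℝ) t, F s with hI
  -- partition of (t, ∞)
  have hunion : Set.Ioi t = ⋃ n : ℕ, Set.Ioc (((n : ℝ) + 1) * t) (((n : ℝ) + 1) * t + t) := by
    ext x
    simp only [Set.mem_Ioi, Set.mem_iUnion, Set.mem_Ioc]
    constructor
    · intro hx
      set y : ℝ := x / t - 1 with hy
      have hy0 : 0 < y := by
        have h : 1 < x / t := (one_lt_div ht).mpr hx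
        simp only [hy]; linarith
      have hceil : 1 ≤ ⌈y⌉₊ := Nat.one_le_iff_ne_zero.mpr (by
        intro h; have := Nat.le_ceil y; rw [h] at this; simp at this; linarith)
      refine ⟨⌈y⌉₊ - 1, ?_, ?_⟩
      · have h1 : ((⌈y⌉₊ : ℝ)) < y + 1 := Nat.ceil_lt_add_one hy0.le
        have h2 : ((⌈y⌉₊ - 1 : ℕ) : ℝ) = (⌈y⌉₊ : ℝ) - 1 := by
          push_cast [hceil]; ring
        rw [h2]
        have : (⌈y⌉₊ : ℝ) - 1 + 1 < y + 1 := by linarith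
        have hlt : (⌈y⌉₊ : ℝ) - 1 + 1 < x / t := by
          simp only [hy] at this; linarith
        calc ((⌈y⌉₊ : ℝ) - 1 + 1) * t < (x / t) * t := by
              exact mul_lt_mul_of_pos_right hlt ht
          _ = x := by field_simp
      · have h1 : y ≤ (⌈y⌉₊ : ℝ) := Nat.le_ceil y
        have h2 : ((⌈y⌉₊ - 1 : ℕ) : ℝ) = (⌈y⌉₊ : ℝ) - 1 := by
          push_cast [hceil]; ring
        rw [h2]
        have : x / t ≤ (⌈y⌉₊ : ℝ) + 1 := by simp only [hy] at h1; linarith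
        calc x = (x / t) * t := by field_simp
          _ ≤ ((⌈y⌉₊ : ℝ) + 1) * t := mul_le_mul_of_nonneg_right this ht.le
          _ = ((⌈y⌉₊ : ℝ) - 1 + 1) * t + t := by ring
    · rintro ⟨n, hn1, _⟩
      have : t ≤ ((n : ℝ) + 1) * t := by nlinarith [(Nat.cast_nonneg n : (0:ℝ) ≤ (n:ℝ))]
      linarith
  have hdisj : Pairwise (Function.onFun Disjoint
      fun n : ℕ => Set.Ioc (((n : ℝ) + 1) * t) (((n : ℝ) + 1) * t + t)) := by
    have hd : ∀ m n : ℕ, m < n →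
        min (((m : ℝ) + 1) * t + t) (((n : ℝ) + 1) * t + t)
          ≤ max (((m : ℝ) + 1) * t) (((n : ℝ) + 1) * t) := by
      intro m n h
      have hmn : (m : ℝ) + 1 ≤ (n : ℝ) := by exact_mod_cast h
      calc min (((m : ℝ) + 1) * t + t) (((n : ℝ) + 1) * t + t)
          ≤ ((m : ℝ) + 1) * t + t := min_le_left _ _
        _ ≤ ((n : ℝ) + 1) * t := by nlinarith
        _ ≤ max (((m : ℝ) + 1) * t) (((n : ℝ) + 1) * t) := le_max_right _ _
    intro m n hmn
    simp only [Function.onFun]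
    apply Set.Ioc_disjoint_Ioc.mpr
    rcases lt_or_gt_of_ne hmn with h | h
    · exact hd m n h
    · rw [min_comm, max_comm]; exact hd n m h
  -- key bound for each piece
  have key : ∀ n : ℕ,
      ∫⁻ s in Set.Ioc (((n : ℝ) + 1) * t) (((n : ℝ) + 1) * t + t), F s
        ≤ ENNReal.ofReal (r ^ (n + 1)) * I := by
    intro n
    set c : ℝ := ((n : ℝ) + 1) * t with hc_def
    have hc0 : 0 < c := by positivity
    have hshift : ∫⁻ s in Set.Ioc c (c + t), F s = ∫⁻ u in Set.Ioc 0 t, F (u + c) := by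
      have h := (measurePreserving_add_right (volume : Measure ℝ) c).setLIntegral_comp_preimage_emb
        (measurableEmbedding_addRight c) F (Set.Ioc c (c + t))
      rw [← h, Set.preimage_add_const_Ioc]
      norm_num
    rw [hshift]
    have hpt : ∀ u ∈ Set.Ioc (0 : ℝ) t, F (u + c) ≤ ENNReal.ofReal (r ^ (n + 1)) * F u := by
      intro u hu
      have hu0 : 0 < u := hu.1
      have hexp : Real.exp (-(α * (u + c))) = r ^ (n + 1) * Real.exp (-(α * u)) := by
        rw [hr_def, ← Real.exp_nat_mul, ← Real.exp_add]
        congr 1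
        push_cast
        rw [hc_def]
        ring
      have hgle : g (u + c) ≤ g u := hg (Set.mem_Ioi.mpr hu0)
        (Set.mem_Ioi.mpr (by linarith)) (by linarith)
      calc F (u + c) = ENNReal.ofReal (r ^ (n + 1)) * ENNReal.ofReal (Real.exp (-(α * u)))
              * g (u + c) := by
            rw [hF]; simp only []; rw [hexp, ENNReal.ofReal_mul (by positivity)]
        _ ≤ ENNReal.ofReal (r ^ (n + 1)) * ENNReal.ofReal (Real.exp (-(α * u))) * g u := by
            exact mul_le_mul_right hgle _
        _ = ENNReal.ofReal (r ^ (n + 1)) * F u := by rw [hF, mul_assoc]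
    calc ∫⁻ u in Set.Ioc (0 : ℝ) t, F (u + c)
        ≤ ∫⁻ u in Set.Ioc (0 : ℝ) t, ENNReal.ofReal (r ^ (n + 1)) * F u :=
          setLIntegral_mono' measurableSet_Ioc hpt
      _ = ENNReal.ofReal (r ^ (n + 1)) * I := lintegral_const_mul' _ _ ENNReal.ofReal_ne_top
  -- put it together
  have hsum : ∫⁻ s in Set.Ioi t, F s
      = ∑' n : ℕ, ∫⁻ s in Set.Ioc (((n : ℝ) + 1) * t) (((n : ℝ) + 1) * t + t), F s := by
    rw [hunion]
    exact lintegral_iUnion (fun n => measurableSet_Ioc) hdisj F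
  rw [hsum]
  have hcoef : (∑' n : ℕ, ENNReal.ofReal (r ^ (n + 1)))
      = ENNReal.ofReal (Real.exp (-(t * α)) / (1 - Real.exp (-(t * α)))) := by
    have hrt : Real.exp (-(t * α)) = r := by rw [hr_def, mul_comm]
    rw [hrt]
    have h1 : ∀ n : ℕ, ENNReal.ofReal (r ^ (n + 1)) = (ENNReal.ofReal r) ^ (n + 1) :=
      fun n => ENNReal.ofReal_pow hr0.le _
    simp_rw [h1, pow_succ, ENNReal.tsum_mul_right, ENNReal.tsum_geometric]
    rw [ENNReal.ofReal_div_of_pos (by linarith), div_eq_mul_inv]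
    have : (1 : ℝ≥0∞) - ENNReal.ofReal r = ENNReal.ofReal (1 - r) := by
      rw [ENNReal.ofReal_sub 1 hr0.le, ENNReal.ofReal_one]
    rw [this, mul_comm]
  calc (∑' n : ℕ, ∫⁻ s in Set.Ioc (((n : ℝ) + 1) * t) (((n : ℝ) + 1) * t + t), F s)
      ≤ ∑' n : ℕ, ENNReal.ofReal (r ^ (n + 1)) * I := ENNReal.tsum_le_tsum key
    _ = (∑' n : ℕ, ENNReal.ofReal (r ^ (n + 1))) * I := ENNReal.tsum_mul_right
    _ = _ := by rw [hcoef]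
end

section
/- Let H be a real Hilbert space and {P_t}_{t≥0} a semigroup of continuous linear operators on H (P_0 = id, P_{s+t} = P_s ∘ P_t for all s,t ≥ 0) such that the operator norm of each P_t is at most 1. Denote by P_t* the Hilbert-space adjoint of P_t. Then for every x ∈ H, α > 0 and t > 0: ∫_t^∞ e^{−αs} ‖P_s* x‖² ds ≤ (e^{tα} − 1)^{−1} · ∫₀^t e^{−αs} ‖P_s* x‖² ds. -/
open MeasureTheory Set Filter
open scoped ENNReal

/-- for a contraction semigroup `{P_t}` on a real Hilbert space, every `x ∈ H`,
`α > 0` and `t > 0`: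
`∫_t^∞ e^{−αs} ‖P_s* x‖² ds ≤ (e^{tα} − 1)⁻¹ ∫₀^t e^{−αs} ‖P_s* x‖² ds`. -/
theorem stmt_9 {H : Type*} [NormedAddCommGroup H] [InnerProductSpace ℝ H] [CompleteSpace H]
    (P : ℝ → H →L[ℝ] H)
    (hP0 : P 0 = ContinuousLinearMap.id ℝ H)
    (hsemi : ∀ s ≥ (0 : ℝ), ∀ t ≥ (0 : ℝ), P (s + t) = (P s).comp (P t))
    (hcontr : ∀ t ≥ (0 : ℝ), ‖P t‖ ≤ 1) :
    ∀ x : H, ∀ α > (0 : ℝ), ∀ t > (0 : ℝ),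
      ∫⁻ s in Set.Ioi t,
          ENNReal.ofReal (Real.exp (-(α * s)) * ‖ContinuousLinearMap.adjoint (P s) x‖ ^ 2) ≤
        ENNReal.ofReal ((Real.exp (t * α) - 1)⁻¹) *
          ∫⁻ s in Set.Ioc (0 : ℝ) t,
            ENNReal.ofReal (Real.exp (-(α * s)) * ‖ContinuousLinearMap.adjoint (P s) x‖ ^ 2) := by
  intro x α hα t ht
  -- the norm of the adjoint orbit is nonincreasing on [0,∞)
  have hkey : ∀ s ≥ (0 : ℝ), ∀ c ≥ (0 : ℝ),
      ‖ContinuousLinearMap.adjoint (P (s + c)) x‖ ≤ ‖ContinuousLinearMap.adjoint (P s) x‖ := by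
    intro s hs c hc
    rw [hsemi s hs c hc, ContinuousLinearMap.adjoint_comp]
    calc ‖(ContinuousLinearMap.adjoint (P c)) ((ContinuousLinearMap.adjoint (P s)) x)‖
        ≤ ‖ContinuousLinearMap.adjoint (P c)‖ * ‖ContinuousLinearMap.adjoint (P s) x‖ :=
          (ContinuousLinearMap.adjoint (P c)).le_opNorm _
      _ ≤ 1 * ‖ContinuousLinearMap.adjoint (P s) x‖ := by
          apply mul_le_mul_of_nonneg_right _ (norm_nonneg _)
          rw [LinearIsometryEquiv.norm_map]
          exact hcontr c hc
      _ = _ := one_mul _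
  set h : ℝ → ℝ := fun s => ‖ContinuousLinearMap.adjoint (P (max s 0)) x‖ with hh
  have hanti : Antitone h := by
    intro a b hab
    have h0a : (0 : ℝ) ≤ max a 0 := le_max_right _ _
    have h0c : (0 : ℝ) ≤ max b 0 - max a 0 := by
      have : max a 0 ≤ max b 0 := max_le_max hab le_rfl
      linarith
    have := hkey (max a 0) h0a (max b 0 - max a 0) h0c
    simpa [hh, add_sub_cancel] using this
  have hmeas : Measurable h := hanti.measurable
  set g : ℝ → ℝ≥0∞ := fun s => ENNReal.ofReal (Real.exp (-(α * s)) * h s ^ 2) with hg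
  have hgmeas : Measurable g := by
    apply Measurable.ennreal_ofReal
    exact ((measurable_const.mul measurable_id).neg.exp).mul (hmeas.pow measurable_const)
  -- g agrees with the integrand on nonnegative s
  have hcong : ∀ s : ℝ, 0 ≤ s →
      ENNReal.ofReal (Real.exp (-(α * s)) * ‖ContinuousLinearMap.adjoint (P s) x‖ ^ 2) = g s := by
    intro s hs
    simp [hg, hh, max_eq_left hs]
  -- decay estimate for g under shifts
  have hshift : ∀ (c : ℝ), 0 ≤ c → ∀ s : ℝ,
      g (s + c) ≤ ENNReal.ofReal (Real.exp (-(α * c))) * g s := by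
    intro c hc s
    rw [hg, ← ENNReal.ofReal_mul (Real.exp_nonneg _)]
    apply ENNReal.ofReal_le_ofReal
    have h1 : h (s + c) ≤ h s := hanti (by linarith)
    have h2 : (0:ℝ) ≤ h (s + c) := norm_nonneg _
    have h3 : h (s + c) ^ 2 ≤ h s ^ 2 := by nlinarith
    have h4 : Real.exp (-(α * (s + c))) = Real.exp (-(α * c)) * Real.exp (-(α * s)) := by
      rw [← Real.exp_add]; ring_nf
    rw [h4, mul_assoc]
    have h5 : (0:ℝ) ≤ Real.exp (-(α * c)) := Real.exp_nonneg _
    nlinarith [Real.exp_pos (-(α * s)), mul_le_mul_of_nonneg_left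
      (mul_le_mul_of_nonneg_left h3 (Real.exp_nonneg (-(α * s)))) h5]
  set r : ℝ := Real.exp (-(α * t)) with hr
  have hr0 : 0 < r := Real.exp_pos _
  have hr1 : r < 1 := by
    rw [hr, Real.exp_lt_one_iff]
    nlinarith
  calc ∫⁻ s in Set.Ioi t,
          ENNReal.ofReal (Real.exp (-(α * s)) * ‖ContinuousLinearMap.adjoint (P s) x‖ ^ 2)
      = ∫⁻ s in Set.Ioi t, g s := by
        apply setLIntegral_congr_fun measurableSet_Ioi
        intro s hs
        exact hcong s (by simp only [mem_Ioi] at hs; linarith)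
    _ ≤ ∫⁻ s in ⋃ n : ℕ, Set.Ico (t + n * t) (t + n * t + t), g s := by
        apply lintegral_mono_set
        intro s hs
        simp only [mem_Ioi] at hs
        have htpos : (0:ℝ) < t := ht
        refine mem_iUnion.2 ⟨⌊(s - t) / t⌋₊, ?_⟩
        have hst : 0 ≤ (s - t) / t := div_nonneg (by linarith) htpos.le
        have h1 : (⌊(s - t) / t⌋₊ : ℝ) ≤ (s - t) / t := Nat.floor_le hst
        have h2 : (s - t) / t < ⌊(s - t) / t⌋₊ + 1 := Nat.lt_floor_add_one _
        constructor
        · have := mul_le_mul_of_nonneg_right h1 htpos.le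
          rw [div_mul_cancel₀ _ htpos.ne'] at this
          linarith
        · have := mul_lt_mul_of_pos_right h2 htpos
          rw [div_mul_cancel₀ _ htpos.ne'] at this
          nlinarith
    _ = ∑' n : ℕ, ∫⁻ s in Set.Ico (t + n * t) (t + n * t + t), g s := by
        apply lintegral_iUnion (fun n => measurableSet_Ico)
        intro m n hmn
        rcases hmn.lt_or_gt with hlt | hlt
        · have h1 : (m:ℝ) + 1 ≤ n := by exact_mod_cast hlt
          have h2 : t + m * t + t ≤ t + n * t := by nlinarith
          simp only [Function.onFun, Set.disjoint_left]
          rintro s ⟨_, hs2⟩ ⟨hs3, _⟩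
          linarith
        · have h1 : (n:ℝ) + 1 ≤ m := by exact_mod_cast hlt
          have h2 : t + n * t + t ≤ t + m * t := by nlinarith
          simp only [Function.onFun, Set.disjoint_left]
          rintro s ⟨hs1, _⟩ ⟨_, hs4⟩
          linarith
    _ = ∑' n : ℕ, ∫⁻ s in Set.Ico (0:ℝ) t, g (s + (t + n * t)) := by
        congr 1
        funext n
        have hmp : MeasurePreserving (fun s : ℝ => s + (t + n * t)) volume volume :=
          measurePreserving_add_right volume _
        have hemb : MeasurableEmbedding (fun s : ℝ => s + (t + n * t)) :=
          (MeasurableEquiv.addRight (t + n * t)).measurableEmbedding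
        have heq := hmp.setLIntegral_comp_preimage_emb hemb g
          (Set.Ico (t + n * t) (t + n * t + t))
        have hpre : (fun s : ℝ => s + (t + n * t)) ⁻¹' Set.Ico (t + n * t) (t + n * t + t)
            = Set.Ico (0:ℝ) t := by
          ext s
          simp only [mem_preimage, mem_Ico]
          constructor
          · rintro ⟨h1, h2⟩; constructor <;> linarith
          · rintro ⟨h1, h2⟩; constructor <;> linarith
        rw [← heq, hpre]
    _ ≤ ∑' n : ℕ, ∫⁻ s in Set.Ico (0:ℝ) t,
          ENNReal.ofReal (Real.exp (-(α * (t + n * t)))) * g s := by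
        apply ENNReal.tsum_le_tsum
        intro n
        apply lintegral_mono
        intro s
        exact hshift (t + n * t) (by positivity) s
    _ = ∑' n : ℕ, ENNReal.ofReal (Real.exp (-(α * (t + n * t)))) *
          ∫⁻ s in Set.Ico (0:ℝ) t, g s := by
        congr 1; funext n
        exact lintegral_const_mul' _ _ ENNReal.ofReal_ne_top
    _ = (∑' n : ℕ, ENNReal.ofReal (Real.exp (-(α * (t + n * t))))) *
          ∫⁻ s in Set.Ico (0:ℝ) t, g s := ENNReal.tsum_mul_right
    _ = ENNReal.ofReal ((Real.exp (t * α) - 1)⁻¹) * ∫⁻ s in Set.Ico (0:ℝ) t, g s := by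
        congr 1
        have hexp : ∀ n : ℕ, Real.exp (-(α * (t + n * t))) = r ^ (n + 1) := by
          intro n
          rw [hr, ← Real.exp_nat_mul]
          congr 1
          push_cast
          ring
        have hsum : Summable (fun n : ℕ => r ^ (n + 1)) := by
          apply Summable.comp_injective (summable_geometric_of_lt_one hr0.le hr1)
          exact fun a b => by omega
        calc ∑' n : ℕ, ENNReal.ofReal (Real.exp (-(α * (t + n * t))))
            = ∑' n : ℕ, ENNReal.ofReal (r ^ (n + 1)) := by
              congr 1; funext n; rw [hexp n]
          _ = ENNReal.ofReal (∑' n : ℕ, r ^ (n + 1)) :=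
              (ENNReal.ofReal_tsum_of_nonneg (fun n => by positivity) hsum).symm
          _ = ENNReal.ofReal ((Real.exp (t * α) - 1)⁻¹) := by
              congr 1
              have h1 : ∑' n : ℕ, r ^ (n + 1) = r / (1 - r) := by
                have := tsum_geometric_of_lt_one hr0.le hr1
                calc ∑' n : ℕ, r ^ (n + 1) = ∑' n : ℕ, r * r ^ n := by
                      congr 1; funext n; ring
                  _ = r * ∑' n : ℕ, r ^ n := tsum_mul_left
                  _ = r * (1 - r)⁻¹ := by rw [this]
                  _ = r / (1 - r) := by rw [div_eq_mul_inv]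
              rw [h1]
              have h2 : Real.exp (t * α) = r⁻¹ := by
                rw [hr, ← Real.exp_neg]; congr 1; ring
              rw [h2]
              rw [div_eq_iff (by linarith : (1:ℝ) - r ≠ 0)]
              rw [inv_eq_one_div]
              rw [div_mul_eq_mul_div, eq_div_iff]
              · field_simp
              · intro hzero
                have : r⁻¹ = 1 := by linarith
                rw [inv_eq_one] at this
                linarith
    _ = ENNReal.ofReal ((Real.exp (t * α) - 1)⁻¹) * ∫⁻ s in Set.Ioc (0:ℝ) t, g s := by
        congr 1
        rw [Measure.restrict_congr_set Ico_ae_eq_Ioc]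
    _ = ENNReal.ofReal ((Real.exp (t * α) - 1)⁻¹) *
          ∫⁻ s in Set.Ioc (0:ℝ) t,
            ENNReal.ofReal (Real.exp (-(α * s)) * ‖ContinuousLinearMap.adjoint (P s) x‖ ^ 2) := by
        congr 1
        apply setLIntegral_congr_fun measurableSet_Ioc
        intro s hs
        exact (hcong s hs.1.le).symm
end

section
/- Let f : ℝ → [0,∞) be a measurable function such that f(ξ)/log|ξ| → ∞ as |ξ| → ∞. Then for every integer n ≥ 0 and every t > 0: ∫_ℝ |ξ|^n e^{−2 t f(ξ)} dξ < ∞. -/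
open MeasureTheory Set Filter
open scoped ENNReal

/-- if `f : ℝ → [0,∞)` is measurable with `f(ξ)/log|ξ| → ∞` as `|ξ| → ∞`,
then `∫_ℝ |ξ|^n e^{−2 t f(ξ)} dξ < ∞` for every integer `n ≥ 0` and `t > 0`. -/
theorem stmt_10 (f : ℝ → ℝ) (hmeas : Measurable f) (hnonneg : ∀ ξ, 0 ≤ f ξ)
    (hgrow : Filter.Tendsto (fun ξ : ℝ => f ξ / Real.log |ξ|)
      (Filter.cocompact ℝ) Filter.atTop) :
    ∀ n : ℕ, ∀ t > (0 : ℝ),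
      ∫⁻ ξ : ℝ, ENNReal.ofReal (|ξ| ^ n * Real.exp (-2 * t * f ξ)) < ⊤ := by
  intro n t ht
  set g : ℝ → ℝ := fun ξ => |ξ| ^ n * Real.exp (-2 * t * f ξ) with hg
  have hgmeas : Measurable g := by
    exact (measurable_abs.pow_const n).mul ((hmeas.const_mul (-2 * t)).exp)
  have hgnonneg : ∀ ξ, 0 ≤ g ξ := fun ξ =>
    mul_nonneg (pow_nonneg (abs_nonneg ξ) n) (Real.exp_pos _).le
  -- it suffices to show g is integrable
  suffices hI : Integrable g by
    exact hI.lintegral_lt_top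
  set C : ℝ := (n + 2) / (2 * t) with hC
  -- from the growth hypothesis, obtain a compact set outside of which f ≥ C log|ξ|
  have hev : ∀ᶠ ξ in Filter.cocompact ℝ, C ≤ f ξ / Real.log |ξ| :=
    hgrow.eventually (eventually_ge_atTop C)
  rw [Filter.hasBasis_cocompact.eventually_iff] at hev
  obtain ⟨K, hK, hKev⟩ := hev
  obtain ⟨M, hM⟩ := hK.isBounded.subset_closedBall 0
  set M' : ℝ := max M 2 with hM'
  have hM'2 : (2 : ℝ) ≤ M' := le_max_right _ _
  have hM'pos : (0 : ℝ) < M' := by linarith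
  -- the key pointwise bound outside [-M', M']
  have key : ∀ ξ : ℝ, M' < |ξ| → g ξ ≤ |ξ| ^ (-2 : ℝ) := by
    intro ξ hξ
    have habs : (1 : ℝ) < |ξ| := by linarith
    have hlogpos : 0 < Real.log |ξ| := Real.log_pos habs
    have hξK : ξ ∉ K := by
      intro hmem
      have := hM hmem
      simp only [Metric.mem_closedBall, Real.dist_eq, sub_zero] at this
      have : |ξ| ≤ M' := le_trans this (le_max_left _ _)
      linarith
    have hfC : C ≤ f ξ / Real.log |ξ| := hKev hξK
    have hf : C * Real.log |ξ| ≤ f ξ := (le_div_iff₀ hlogpos).1 hfC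
    have hexp : Real.exp (-2 * t * f ξ) ≤ |ξ| ^ (-(n + 2) : ℝ) := by
      have h1 : -2 * t * f ξ ≤ -(n + 2) * Real.log |ξ| := by
        have h2 : 2 * t * (C * Real.log |ξ|) ≤ 2 * t * f ξ :=
          mul_le_mul_of_nonneg_left hf (by linarith)
        have h3 : 2 * t * C = n + 2 := by
          rw [hC]; field_simp [ht.ne']
        nlinarith [h2, h3]
      calc Real.exp (-2 * t * f ξ) ≤ Real.exp (-(n + 2) * Real.log |ξ|) :=
            Real.exp_le_exp.2 h1
        _ = |ξ| ^ (-(n + 2) : ℝ) := by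
            rw [Real.rpow_def_of_pos (by linarith : (0:ℝ) < |ξ|), mul_comm]
    calc g ξ ≤ |ξ| ^ n * |ξ| ^ (-(n + 2) : ℝ) :=
          mul_le_mul_of_nonneg_left hexp (pow_nonneg (abs_nonneg ξ) n)
      _ = |ξ| ^ (-2 : ℝ) := by
          rw [← Real.rpow_natCast |ξ| n, ← Real.rpow_add (by linarith : (0:ℝ) < |ξ|)]
          norm_num
  -- integrability on the three pieces
  have hR : IntegrableOn (fun x : ℝ => x ^ (-2 : ℝ)) (Ioi M') :=
    integrableOn_Ioi_rpow_of_lt (by norm_num) hM'pos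
  have hIoi : IntegrableOn g (Ioi M') := by
    refine hR.integrable.mono' hgmeas.aestronglyMeasurable ?_
    filter_upwards [ae_restrict_mem measurableSet_Ioi] with ξ hξ
    have hξ' : M' < |ξ| := by
      rw [abs_of_pos (lt_trans hM'pos hξ)]; exact hξ
    rw [Real.norm_of_nonneg (hgnonneg ξ)]
    calc g ξ ≤ |ξ| ^ (-2 : ℝ) := key ξ hξ'
      _ = ξ ^ (-2 : ℝ) := by rw [abs_of_pos (lt_trans hM'pos hξ)]
  have hL : IntegrableOn (fun x : ℝ => (-x) ^ (-2 : ℝ)) (Iio (-M')) := by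
    have hmap : Measure.map (MeasurableEquiv.neg ℝ) (volume : Measure ℝ) = volume := by
      simpa using Measure.map_neg_eq_self (volume : Measure ℝ)
    have h2 : IntegrableOn (fun x : ℝ => (-x) ^ (-2 : ℝ)) (Iio (-M'))
        (Measure.map (MeasurableEquiv.neg ℝ) volume) := by
      rw [integrableOn_map_equiv]
      have hpre : (MeasurableEquiv.neg ℝ) ⁻¹' (Iio (-M')) = Ioi M' := by
        ext x
        simp [MeasurableEquiv.neg, neg_lt]
      rw [hpre]
      apply hR.congr_fun _ measurableSet_Ioi
      intro x _
      simp [MeasurableEquiv.neg]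
    rwa [hmap] at h2
  have hIio : IntegrableOn g (Iio (-M')) := by
    refine hL.integrable.mono' hgmeas.aestronglyMeasurable ?_
    filter_upwards [ae_restrict_mem measurableSet_Iio] with ξ hξ
    have hξneg : ξ < 0 := lt_trans hξ (by linarith)
    have hξ' : M' < |ξ| := by rw [abs_of_neg hξneg]; linarith [mem_Iio.1 hξ]
    rw [Real.norm_of_nonneg (hgnonneg ξ)]
    calc g ξ ≤ |ξ| ^ (-2 : ℝ) := key ξ hξ'
      _ = (-ξ) ^ (-2 : ℝ) := by rw [abs_of_neg hξneg]
  have hIcc : IntegrableOn g (Icc (-M') M') := by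
    have hconst : IntegrableOn (fun _ : ℝ => M' ^ n) (Icc (-M') M') := by
      refine integrableOn_const ?_
      rw [Real.volume_Icc]; exact ENNReal.ofReal_ne_top
    refine hconst.integrable.mono' hgmeas.aestronglyMeasurable ?_
    · filter_upwards [ae_restrict_mem measurableSet_Icc] with ξ hξ
      rw [Real.norm_of_nonneg (hgnonneg ξ)]
      have habs : |ξ| ≤ M' := abs_le.2 ⟨hξ.1, hξ.2⟩
      calc g ξ ≤ |ξ| ^ n * 1 := by
            apply mul_le_mul_of_nonneg_left _ (pow_nonneg (abs_nonneg ξ) n)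
            rw [Real.exp_le_one_iff]
            have := hnonneg ξ
            nlinarith
        _ = |ξ| ^ n := mul_one _
        _ ≤ M' ^ n := pow_le_pow_left₀ (abs_nonneg ξ) habs n
  -- combine
  have hcover : (univ : Set ℝ) ⊆ Iio (-M') ∪ Icc (-M') M' ∪ Ioi M' := by
    intro x _
    rcases lt_or_ge x (-M') with h | h
    · exact Or.inl (Or.inl h)
    · rcases le_or_gt x M' with h' | h'
      · exact Or.inl (Or.inr ⟨h, h'⟩)
      · exact Or.inr h'
  have : IntegrableOn g (Iio (-M') ∪ Icc (-M') M' ∪ Ioi M') :=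
    (hIio.union hIcc).union hIoi
  rw [← integrableOn_univ]
  exact this.mono_set hcover
end

section
/- Let f : ℝ → [0,∞) be a measurable function such that ∫_ℝ dξ/(α + 2 f(ξ)) < ∞ for some α > 0. Then limsup_{|ξ|→∞} f(ξ)/|ξ| = ∞. -/
open MeasureTheory Set Filter
open scoped ENNReal

/-- if `f : ℝ → [0,∞)` is measurable with `∫_ℝ dξ/(α + 2 f(ξ)) < ∞` for some
`α > 0`, then `limsup_{|ξ|→∞} f(ξ)/|ξ| = ∞`. -/
theorem stmt_11 (f : ℝ → ℝ) (hmeas : Measurable f) (hnonneg : ∀ ξ, 0 ≤ f ξ)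
    (α : ℝ) (hα : 0 < α)
    (hint : ∫⁻ ξ : ℝ, ENNReal.ofReal (1 / (α + 2 * f ξ)) < ⊤) :
    Filter.limsup (fun ξ : ℝ => ((f ξ / |ξ| : ℝ) : EReal)) (Filter.cocompact ℝ) = ⊤ := by
  by_contra h
  have hlt : Filter.limsup (fun ξ : ℝ => ((f ξ / |ξ| : ℝ) : EReal)) (Filter.cocompact ℝ) < ⊤ :=
    lt_top_iff_ne_top.2 h
  obtain ⟨C, hC, -⟩ := EReal.exists_between_coe_real hlt
  have hev : ∀ᶠ ξ : ℝ in Filter.cocompact ℝ, ((f ξ / |ξ| : ℝ) : EReal) < (C : EReal) :=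
    Filter.eventually_lt_of_limsup_lt hC
  rw [cocompact_eq_atBot_atTop] at hev
  have hevT : ∀ᶠ ξ : ℝ in atTop, ((f ξ / |ξ| : ℝ) : EReal) < (C : EReal) :=
    hev.filter_mono le_sup_right
  obtain ⟨R, hR⟩ := eventually_atTop.1 hevT
  set R₀ : ℝ := max R 1 with hR₀
  have hR₀1 : (1 : ℝ) ≤ R₀ := le_max_right _ _
  have hR₀0 : (0 : ℝ) < R₀ := lt_of_lt_of_le one_pos hR₀1
  set D : ℝ := max C 1 with hD
  have hD1 : (1 : ℝ) ≤ D := le_max_right _ _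
  have hD0 : (0 : ℝ) < D := lt_of_lt_of_le one_pos hD1
  have hAD : (0 : ℝ) < α + 2 * D := by linarith
  -- for ξ ≥ R₀, f ξ ≤ D * ξ
  have key : ∀ ξ : ℝ, R₀ ≤ ξ → f ξ ≤ D * ξ := by
    intro ξ hξ
    have hξ1 : (1 : ℝ) ≤ ξ := le_trans hR₀1 hξ
    have hξ0 : (0 : ℝ) < ξ := lt_of_lt_of_le one_pos hξ1
    have h1 : ((f ξ / |ξ| : ℝ) : EReal) < (C : EReal) := hR ξ (le_trans (le_max_left _ _) hξ)
    have h2 : f ξ / |ξ| < C := by exact_mod_cast h1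
    rw [abs_of_pos hξ0, div_lt_iff₀ hξ0] at h2
    calc f ξ ≤ C * ξ := h2.le
      _ ≤ D * ξ := by
          have := le_max_left C 1
          nlinarith
  -- pointwise bound on Ioi R₀
  have hpt : ∀ ξ ∈ Ioi R₀,
      ENNReal.ofReal ((α + 2 * D)⁻¹ * ξ⁻¹) ≤ ENNReal.ofReal (1 / (α + 2 * f ξ)) := by
    intro ξ hξ
    have hξ1 : (1 : ℝ) ≤ ξ := le_trans hR₀1 (le_of_lt hξ)
    have hξ0 : (0 : ℝ) < ξ := lt_of_lt_of_le one_pos hξ1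
    apply ENNReal.ofReal_le_ofReal
    rw [one_div, ← mul_inv]
    apply inv_anti₀
    · linarith [hnonneg ξ]
    · have := key ξ (le_of_lt hξ)
      nlinarith
  -- the restricted lintegral of the small function is finite
  have hfin : ∫⁻ ξ in Ioi R₀, ENNReal.ofReal ((α + 2 * D)⁻¹ * ξ⁻¹) < ⊤ := by
    calc ∫⁻ ξ in Ioi R₀, ENNReal.ofReal ((α + 2 * D)⁻¹ * ξ⁻¹)
        ≤ ∫⁻ ξ in Ioi R₀, ENNReal.ofReal (1 / (α + 2 * f ξ)) :=
          setLIntegral_mono (by fun_prop) hpt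
      _ ≤ ∫⁻ ξ : ℝ, ENNReal.ofReal (1 / (α + 2 * f ξ)) := setLIntegral_le_lintegral _ _
      _ < ⊤ := hint
  -- hence the function is integrable on Ioi R₀
  have hInt : IntegrableOn (fun ξ : ℝ => (α + 2 * D)⁻¹ * ξ⁻¹) (Ioi R₀) := by
    constructor
    · exact ((measurable_const.mul measurable_inv).aestronglyMeasurable).restrict
    · rw [hasFiniteIntegral_iff_ofReal]
      · exact hfin
      · filter_upwards [ae_restrict_mem measurableSet_Ioi] with ξ hξ
        have hξ0 : (0 : ℝ) < ξ := lt_of_lt_of_le hR₀0 (le_of_lt hξ)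
        positivity
  have hInv : IntegrableOn (fun ξ : ℝ => ξ⁻¹) (Ioi R₀) := by
    have h2 : IntegrableOn (fun ξ : ℝ => (α + 2 * D) * ((α + 2 * D)⁻¹ * ξ⁻¹)) (Ioi R₀) :=
      hInt.const_mul (α + 2 * D)
    refine h2.congr_fun (fun ξ _ => ?_) measurableSet_Ioi
    beta_reduce
    rw [← mul_assoc, mul_inv_cancel₀ (ne_of_gt hAD), one_mul]
  have hrpow : IntegrableOn (fun ξ : ℝ => ξ ^ (-1 : ℝ)) (Ioi R₀) := by
    refine hInv.congr_fun (fun ξ hξ => ?_) measurableSet_Ioi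
    rw [Real.rpow_neg_one]
  rw [integrableOn_Ioi_rpow_iff hR₀0] at hrpow
  exact lt_irrefl _ hrpow
end

section
/- Let ν be a Borel measure on ℝ with ν({0}) = 0 and ∫ min(x², 1) ν(dx) < ∞. Define ψ(ξ) := ∫_ℝ (1 − cos(xξ)) ν(dx), K(ε) := ε^{−2} ∫_{|x|≤ε} x² ν(dx), and G(ε) := ν({x : |x| > ε}). Suppose limsup_{ε→0+} G(ε)/K(ε) < ∞ and ∫_ℝ dξ/(1 + 2 ψ(ξ)) < ∞. Then lim_{|ξ|→∞} ψ(ξ)/|ξ| = ∞. -/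
open MeasureTheory Set Filter
open scoped ENNReal Topology

private lemma stmt13_cos_lb {t : ℝ} (h : |t| ≤ 1) : t ^ 2 / 4 ≤ 1 - Real.cos t := by
  have hb := abs_le.1 (Real.cos_bound h)
  have h4 : |t| ^ 4 ≤ t ^ 2 := by
    have : |t| ^ 4 ≤ |t| ^ 2 := pow_le_pow_of_le_one (abs_nonneg t) h (by norm_num)
    simpa [sq_abs] using this
  nlinarith [hb.2]

private lemma stmt13_cos_ub (t : ℝ) : 1 - Real.cos t ≤ t ^ 2 / 2 := by
  have := Real.one_sub_sq_div_two_le_cos (x := t)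
  linarith

private lemma stmt13_cos_ub2 (t : ℝ) : 1 - Real.cos t ≤ 2 := by
  have := Real.neg_one_le_cos t
  linarith

private lemma stmt13_cos_nonneg (t : ℝ) : 0 ≤ 1 - Real.cos t := by
  have := Real.cos_le_one t; linarith

set_option maxHeartbeats 1000000 in
/-- for a Lévy measure `ν` with `ψ(ξ) = ∫ (1 − cos(xξ)) ν(dx)` and Feller
functions `K`, `G`, if `limsup_{ε→0+} G(ε)/K(ε) < ∞` and `∫ dξ/(1 + 2ψ(ξ)) < ∞`, then
`lim_{|ξ|→∞} ψ(ξ)/|ξ| = ∞`. -/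
theorem stmt_13 (ν : Measure ℝ) (hν0 : ν {0} = 0)
    (hνint : ∫⁻ x : ℝ, ENNReal.ofReal (min (x ^ 2) 1) ∂ν < ⊤)
    (ψ K G : ℝ → ℝ)
    (hψ : ∀ ξ : ℝ, ψ ξ = (∫⁻ x : ℝ, ENNReal.ofReal (1 - Real.cos (x * ξ)) ∂ν).toReal)
    (hK : ∀ ε : ℝ, K ε =
      (ε ^ 2)⁻¹ * (∫⁻ x in {x : ℝ | |x| ≤ ε}, ENNReal.ofReal (x ^ 2) ∂ν).toReal)
    (hG : ∀ ε : ℝ, G ε = (ν {x : ℝ | ε < |x|}).toReal)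
    (hKG : ∃ M : ℝ, ∀ᶠ ε in nhdsWithin (0 : ℝ) (Set.Ioi 0), G ε / K ε ≤ M)
    (hdalang : ∫⁻ ξ : ℝ, ENNReal.ofReal (1 / (1 + 2 * ψ ξ)) < ⊤) :
    Filter.Tendsto (fun ξ : ℝ => ψ ξ / |ξ|) (Filter.cocompact ℝ) Filter.atTop := by
  classical
  have hmin_meas : Measurable fun x : ℝ => ENNReal.ofReal (min (x ^ 2) 1) :=
    ((measurable_id.pow_const 2).min measurable_const).ennreal_ofReal
  have hcos_meas : ∀ ξ : ℝ, Measurable fun x : ℝ => ENNReal.ofReal (1 - Real.cos (x * ξ)) :=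
    fun ξ => (measurable_const.sub
      (Real.measurable_cos.comp (measurable_id.mul_const ξ))).ennreal_ofReal
  have hsq_meas : Measurable fun x : ℝ => ENNReal.ofReal (x ^ 2) :=
    (measurable_id.pow_const 2).ennreal_ofReal
  set s : ℝ → Set ℝ := fun ε => {x : ℝ | |x| ≤ ε} with hs_def
  have hs_meas : ∀ ε : ℝ, MeasurableSet (s ε) :=
    fun ε => measurableSet_le (measurable_id.abs) measurable_const
  have hsc : ∀ ε : ℝ, {x : ℝ | ε < |x|} = (s ε)ᶜ := by
    intro ε; ext x; simp [hs_def, not_le]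
  set m : ℝ → ℝ≥0∞ := fun ε => ∫⁻ x in s ε, ENNReal.ofReal (x ^ 2) ∂ν with hm_def
  set Φ : ℝ → ℝ≥0∞ := fun ξ => ∫⁻ x : ℝ, ENNReal.ofReal (1 - Real.cos (x * ξ)) ∂ν with hΦ_def
  have hψΦ : ∀ ξ, ψ ξ = (Φ ξ).toReal := hψ
  have hψ_nonneg : ∀ ξ, 0 ≤ ψ ξ := fun ξ => (hψΦ ξ) ▸ ENNReal.toReal_nonneg
  -- monotonicity of m
  have hm_mono : ∀ {a b : ℝ}, a ≤ b → m a ≤ m b := by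
    intro a b hab
    exact lintegral_mono_set (fun x hx => le_trans hx hab)
  -- finiteness of m for ε ≤ 1
  have hm_fin : ∀ ε : ℝ, ε ≤ 1 → m ε < ⊤ := by
    intro ε hε
    have h1 : m ε ≤ ∫⁻ x in s ε, ENNReal.ofReal (min (x ^ 2) 1) ∂ν := by
      refine setLIntegral_mono hmin_meas (fun x hx => ?_)
      have hx1 : x ^ 2 ≤ 1 := by
        have : |x| ≤ 1 := le_trans hx hε
        nlinarith [abs_nonneg x, sq_abs x]
      rw [min_eq_left hx1]
    exact lt_of_le_of_lt (h1.trans (setLIntegral_le_lintegral _ _)) hνint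
  -- finiteness of ν {|x| > ε}
  have hG_fin : ∀ ε : ℝ, 0 < ε → ν {x : ℝ | ε < |x|} < ⊤ := by
    intro ε hε
    rw [hsc]
    have h1 : ENNReal.ofReal (min (ε ^ 2) 1) * ν (s ε)ᶜ
        ≤ ∫⁻ x : ℝ, ENNReal.ofReal (min (x ^ 2) 1) ∂ν := by
      rw [← setLIntegral_const ((s ε)ᶜ) _]
      refine le_trans (setLIntegral_mono hmin_meas (fun x hx => ?_))
        (setLIntegral_le_lintegral _ _)
      have hx : ε < |x| := by simpa [hs_def, not_le] using hx
      refine ENNReal.ofReal_le_ofReal (min_le_min ?_ le_rfl)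
      nlinarith [abs_nonneg x, sq_abs x]
    by_contra h
    push_neg at h
    rw [top_le_iff.1 h, ENNReal.mul_top] at h1
    · exact absurd (lt_of_le_of_lt h1 hνint) (lt_irrefl _)
    · simp only [ne_eq, ENNReal.ofReal_eq_zero, not_le]
      positivity
  -- finiteness of Φ
  have hΦ_fin : ∀ ξ : ℝ, Φ ξ < ⊤ := by
    intro ξ
    have h1 : Φ ξ ≤ ∫⁻ x : ℝ, ENNReal.ofReal (ξ ^ 2 + 2) * ENNReal.ofReal (min (x ^ 2) 1) ∂ν := by
      refine lintegral_mono (fun x => ?_)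
      rw [← ENNReal.ofReal_mul (by positivity)]
      refine ENNReal.ofReal_le_ofReal ?_
      rcases le_or_gt (x ^ 2) 1 with hx | hx
      · rw [min_eq_left hx]
        have := stmt13_cos_ub (x * ξ)
        nlinarith [sq_nonneg x, sq_nonneg ξ, mul_pow x ξ 2]
      · rw [min_eq_right hx.le]
        have := stmt13_cos_ub2 (x * ξ)
        nlinarith [sq_nonneg ξ]
    rw [lintegral_const_mul' _ _ ENNReal.ofReal_ne_top] at h1
    exact lt_of_le_of_lt h1 (ENNReal.mul_lt_top ENNReal.ofReal_lt_top hνint)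
  -- lower bound
  have hlow : ∀ ξ : ℝ, ξ ≠ 0 → ENNReal.ofReal (ξ ^ 2 / 4) * m (1 / |ξ|) ≤ Φ ξ := by
    intro ξ hξ
    have hξpos : 0 < |ξ| := abs_pos.2 hξ
    rw [hm_def, ← lintegral_const_mul' _ _ ENNReal.ofReal_ne_top]
    refine le_trans (setLIntegral_mono (hcos_meas ξ) (fun x hx => ?_))
      (setLIntegral_le_lintegral _ (fun x => ENNReal.ofReal (1 - Real.cos (x * ξ))))
    have hx : |x| ≤ 1 / |ξ| := hx
    have habs : |x * ξ| ≤ 1 := by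
      rw [abs_mul]
      calc |x| * |ξ| ≤ (1 / |ξ|) * |ξ| := by gcongr
        _ = 1 := by field_simp
    have := stmt13_cos_lb habs
    rw [← ENNReal.ofReal_mul (by positivity)]
    refine ENNReal.ofReal_le_ofReal ?_
    nlinarith [mul_pow x ξ 2]
  -- upper bound
  have hup : ∀ ξ ε : ℝ, Φ ξ ≤ ENNReal.ofReal (ξ ^ 2 / 2) * m ε + 2 * ν ((s ε)ᶜ) := by
    intro ξ ε
    have hsplit : Φ ξ = (∫⁻ x in s ε, ENNReal.ofReal (1 - Real.cos (x * ξ)) ∂ν)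
        + ∫⁻ x in (s ε)ᶜ, ENNReal.ofReal (1 - Real.cos (x * ξ)) ∂ν :=
      (lintegral_add_compl (fun x => ENNReal.ofReal (1 - Real.cos (x * ξ))) (hs_meas ε)).symm
    rw [hsplit]
    gcongr
    · rw [hm_def, ← lintegral_const_mul' _ _ ENNReal.ofReal_ne_top]
      refine setLIntegral_mono (hsq_meas.const_mul _) (fun x hx => ?_)
      rw [← ENNReal.ofReal_mul (by positivity)]
      refine ENNReal.ofReal_le_ofReal ?_
      have := stmt13_cos_ub (x * ξ)
      nlinarith [mul_pow x ξ 2]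
    · calc ∫⁻ x in (s ε)ᶜ, ENNReal.ofReal (1 - Real.cos (x * ξ)) ∂ν
          ≤ ∫⁻ _ in (s ε)ᶜ, (2 : ℝ≥0∞) ∂ν := by
            refine setLIntegral_mono measurable_const (fun x _ => ?_)
            calc ENNReal.ofReal (1 - Real.cos (x * ξ)) ≤ ENNReal.ofReal 2 :=
                ENNReal.ofReal_le_ofReal (stmt13_cos_ub2 _)
              _ = 2 := by norm_num
        _ = 2 * ν ((s ε)ᶜ) := setLIntegral_const _ _
  -- ψ is even
  have hψ_even : ∀ ξ : ℝ, ψ (-ξ) = ψ ξ := by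
    intro ξ
    rw [hψ ξ, hψ (-ξ)]
    congr 1
    refine lintegral_congr (fun x => ?_)
    rw [mul_neg, Real.cos_neg]
  by_cases hcase : ∃ ε ∈ Ioc (0:ℝ) 1, m ε = 0
  -- Case A: ν vanishes near 0, contradiction with Dalang's condition
  · exfalso
    obtain ⟨ε, hε, hmε⟩ := hcase
    have hν_s : ν (s ε) = 0 := by
      have h0 : (ν.restrict (s ε)) {x : ℝ | x ≠ 0} = 0 := by
        have hae := (lintegral_eq_zero_iff hsq_meas).1 hmε
        have h1 := ae_iff.1 hae
        refine measure_mono_null (fun x hx => ?_) h1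
        simp only [mem_setOf_eq, Pi.zero_apply, ENNReal.ofReal_eq_zero, not_le]
        exact pow_two_pos_of_ne_zero hx
      have h2 : ν ({x : ℝ | x ≠ 0} ∩ s ε) = 0 := by
        have hne : MeasurableSet {x : ℝ | x ≠ 0} := (measurableSet_singleton (0:ℝ)).compl
        rwa [Measure.restrict_apply hne] at h0
      have h3 : s ε ⊆ ({x : ℝ | x ≠ 0} ∩ s ε) ∪ {0} := by
        intro x hx
        by_cases hx0 : x = 0
        · exact Or.inr (by simp [hx0])
        · exact Or.inl ⟨hx0, hx⟩
      exact measure_mono_null h3 (measure_union_null h2 hν0)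
    set B : ℝ := (2 * ν ((s ε)ᶜ)).toReal with hB
    have hB_nonneg : 0 ≤ B := ENNReal.toReal_nonneg
    have hνc_fin : 2 * ν ((s ε)ᶜ) ≠ ⊤ := by
      refine ENNReal.mul_ne_top (by norm_num) ?_
      rw [← hsc]
      exact (hG_fin ε hε.1).ne
    have hψB : ∀ ξ : ℝ, ψ ξ ≤ B := by
      intro ξ
      have h4 : Φ ξ ≤ 2 * ν ((s ε)ᶜ) := by
        have h5 := hup ξ ε
        rwa [hmε, mul_zero, zero_add] at h5
      rw [hψΦ]
      exact ENNReal.toReal_mono hνc_fin h4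
    have hconst : ∀ ξ : ℝ,
        ENNReal.ofReal (1 / (1 + 2 * B)) ≤ ENNReal.ofReal (1 / (1 + 2 * ψ ξ)) := by
      intro ξ
      refine ENNReal.ofReal_le_ofReal ?_
      have := hψ_nonneg ξ
      refine one_div_le_one_div_of_le (by linarith) (by linarith [hψB ξ])
    have htop : (⊤ : ℝ≥0∞) ≤ ∫⁻ ξ : ℝ, ENNReal.ofReal (1 / (1 + 2 * ψ ξ)) := by
      calc (⊤ : ℝ≥0∞) = ∫⁻ _ : ℝ, ENNReal.ofReal (1 / (1 + 2 * B)) := by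
            rw [lintegral_const, Real.volume_univ, ENNReal.mul_top]
            simp only [ne_eq, ENNReal.ofReal_eq_zero, not_le]
            positivity
        _ ≤ _ := lintegral_mono hconst
    exact absurd (lt_of_le_of_lt htop hdalang) (lt_irrefl _)
  -- Case B
  · push_neg at hcase
    obtain ⟨M, hM⟩ := hKG
    obtain ⟨u, hu, husub⟩ := mem_nhdsGT_iff_exists_Ioo_subset.1 hM
    set ε₁ : ℝ := min u 1 with hε₁
    have hε₁pos : 0 < ε₁ := lt_min hu one_pos
    have hε₁le1 : ε₁ ≤ 1 := min_le_right _ _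
    have hKm : ∀ ε : ℝ, K ε = (ε ^ 2)⁻¹ * (m ε).toReal := hK
    have hGm : ∀ ε : ℝ, G ε = (ν ((s ε)ᶜ)).toReal := by
      intro ε; rw [hG, hsc]
    have hK_pos : ∀ ε : ℝ, 0 < ε → ε ≤ 1 → 0 < K ε := by
      intro ε h1 h2
      rw [hKm]
      have hmpos : 0 < (m ε).toReal :=
        ENNReal.toReal_pos (hcase ε ⟨h1, h2⟩) (hm_fin ε h2).ne
      positivity
    have hGK : ∀ ε : ℝ, 0 < ε → ε < ε₁ → G ε ≤ M * K ε := by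
      intro ε h1 h2
      have hεu : ε ∈ Ioo (0:ℝ) u := ⟨h1, lt_of_lt_of_le h2 (min_le_left _ _)⟩
      have := husub hεu
      exact (div_le_iff₀ (hK_pos ε h1 (le_of_lt (lt_of_lt_of_le h2 hε₁le1)))).1 this
    have hM0 : 0 ≤ M := by
      have hhalf : ε₁ / 2 ∈ Ioo (0:ℝ) u := by
        have h5 : ε₁ / 2 < ε₁ := by linarith
        exact ⟨by positivity, lt_of_lt_of_le h5 (min_le_left _ _)⟩
      have h6 := husub hhalf
      have hGnn : 0 ≤ G (ε₁ / 2) := by rw [hG]; exact ENNReal.toReal_nonneg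
      have hKpos := hK_pos (ε₁ / 2) (by positivity) (by linarith)
      exact le_trans (div_nonneg hGnn hKpos.le) h6
    set C : ℝ := 1 / 2 + 2 * M with hC_def
    have hC : 0 < C := by positivity
    obtain ⟨μr, hμr_eq⟩ : ∃ f : ℝ → ℝ, ∀ T, f T = (m (1 / T)).toReal :=
      ⟨fun T => (m (1 / T)).toReal, fun _ => rfl⟩
    have hμr_nonneg : ∀ T : ℝ, 0 ≤ μr T := fun T => (hμr_eq T) ▸ ENNReal.toReal_nonneg
    have hμr_mono : ∀ {a b : ℝ}, 2 ≤ a → a ≤ b → μr b ≤ μr a := by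
      intro a b ha hab
      have h7 : m (1 / b) ≤ m (1 / a) :=
        hm_mono (one_div_le_one_div_of_le (by linarith) hab)
      rw [hμr_eq, hμr_eq]
      exact ENNReal.toReal_mono (hm_fin _ (by rw [div_le_one (by linarith)]; linarith)).ne h7
    set ξ₀ : ℝ := max 2 (2 / ε₁) with hξ₀_def
    have hξ₀2 : 2 ≤ ξ₀ := le_max_left _ _
    -- upper bound for ψ
    have hkey_up : ∀ ξ : ℝ, ξ₀ ≤ ξ → ψ ξ ≤ C * (ξ ^ 2 * μr ξ) := by
      intro ξ hξ
      have hξ2 : 2 ≤ ξ := le_trans hξ₀2 hξ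
      have hξpos : 0 < ξ := by linarith
      have hεpos : 0 < 1 / ξ := by positivity
      have hεlt : 1 / ξ < ε₁ := by
        have h2 : 2 / ε₁ ≤ ξ := le_trans (le_max_right _ _) hξ
        calc 1 / ξ ≤ 1 / (2 / ε₁) := one_div_le_one_div_of_le (by positivity) h2
          _ = ε₁ / 2 := by rw [one_div_div]
          _ < ε₁ := by linarith
      have hεle1 : 1 / ξ ≤ 1 := by rw [div_le_one hξpos]; linarith
      have h1 := hup ξ (1 / ξ)
      have hfin1 : ENNReal.ofReal (ξ ^ 2 / 2) * m (1 / ξ) ≠ ⊤ :=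
        ENNReal.mul_ne_top ENNReal.ofReal_ne_top (hm_fin _ hεle1).ne
      have hfin2 : 2 * ν ((s (1 / ξ))ᶜ) ≠ ⊤ := by
        refine ENNReal.mul_ne_top (by norm_num) ?_
        rw [← hsc]
        exact (hG_fin _ hεpos).ne
      have h2 : ψ ξ ≤ ξ ^ 2 / 2 * μr ξ + 2 * G (1 / ξ) := by
        rw [hψΦ, hGm]
        calc (Φ ξ).toReal
            ≤ (ENNReal.ofReal (ξ ^ 2 / 2) * m (1 / ξ) + 2 * ν ((s (1 / ξ))ᶜ)).toReal :=
              ENNReal.toReal_mono (ENNReal.add_ne_top.2 ⟨hfin1, hfin2⟩) h1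
          _ = ξ ^ 2 / 2 * μr ξ + 2 * (ν ((s (1 / ξ))ᶜ)).toReal := by
              rw [ENNReal.toReal_add hfin1 hfin2, ENNReal.toReal_mul, ENNReal.toReal_mul,
                ENNReal.toReal_ofReal (by positivity), ENNReal.toReal_ofNat, hμr_eq]
      have hGK' : G (1 / ξ) ≤ M * K (1 / ξ) := hGK _ hεpos hεlt
      have hKval : K (1 / ξ) = ξ ^ 2 * μr ξ := by
        rw [hKm, hμr_eq]
        have : ((1 / ξ) ^ 2)⁻¹ = ξ ^ 2 := by
          field_simp
        rw [this]
      rw [hKval] at hGK'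
      have hμnn := hμr_nonneg ξ
      calc ψ ξ ≤ ξ ^ 2 / 2 * μr ξ + 2 * (M * (ξ ^ 2 * μr ξ)) := by linarith
        _ = C * (ξ ^ 2 * μr ξ) := by rw [hC_def]; ring
    -- lower bound for ψ
    have hkey_low : ∀ ξ : ℝ, 0 < ξ → ξ ^ 2 / 4 * μr ξ ≤ ψ ξ := by
      intro ξ hξpos
      have h1 := hlow ξ (ne_of_gt hξpos)
      rw [abs_of_pos hξpos] at h1
      rw [hψΦ]
      calc ξ ^ 2 / 4 * μr ξ = (ENNReal.ofReal (ξ ^ 2 / 4) * m (1 / ξ)).toReal := by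
            rw [ENNReal.toReal_mul, ENNReal.toReal_ofReal (by positivity), hμr_eq]
        _ ≤ (Φ ξ).toReal := ENNReal.toReal_mono (hΦ_fin ξ).ne h1
    -- sigma-finiteness of ν
    have hSF : SigmaFinite ν := by
      refine ⟨⟨⟨fun n => {0} ∪ {x : ℝ | 1 / ((n : ℝ) + 1) < |x|}, fun _ => mem_univ _,
        fun n => ?_, ?_⟩⟩⟩
      · refine lt_of_le_of_lt (measure_union_le _ _) ?_
        rw [hν0, zero_add]
        exact hG_fin _ (by positivity)
      · ext x
        simp only [mem_iUnion, mem_union, mem_singleton_iff, mem_setOf_eq, mem_univ, iff_true]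
        rcases eq_or_ne x 0 with h | h
        · exact ⟨0, Or.inl h⟩
        · obtain ⟨n, hn⟩ := exists_nat_one_div_lt (abs_pos.2 h)
          exact ⟨n, Or.inr hn⟩
    -- measurability of ψ
    have hjoint : Measurable fun p : ℝ × ℝ => ENNReal.ofReal (1 - Real.cos (p.2 * p.1)) :=
      (measurable_const.sub
        (Real.measurable_cos.comp (measurable_snd.mul measurable_fst))).ennreal_ofReal
    have hΦ_meas : Measurable Φ := hjoint.lintegral_prod_right'
    have hψ_meas : Measurable ψ := by
      have hψeq : ψ = fun ξ => (Φ ξ).toReal := funext hψΦ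
      rw [hψeq]
      exact hΦ_meas.ennreal_toReal
    have hf_meas : Measurable fun ξ : ℝ => ENNReal.ofReal (1 / (1 + 2 * ψ ξ)) :=
      (measurable_const.div (measurable_const.add (hψ_meas.const_mul 2))).ennreal_ofReal
    -- the finite measure with density 1/(1+2ψ)
    obtain ⟨ρ, hρ_Ici, hρ_univ⟩ : ∃ ρ : Measure ℝ,
        (∀ T : ℝ, ρ (Ici T) = ∫⁻ ξ in Ici T, ENNReal.ofReal (1 / (1 + 2 * ψ ξ)))
        ∧ ρ univ ≠ ⊤ := by
      refine ⟨volume.withDensity (fun ξ => ENNReal.ofReal (1 / (1 + 2 * ψ ξ))),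
        fun T => withDensity_apply _ measurableSet_Ici, ?_⟩
      rw [withDensity_apply _ MeasurableSet.univ, Measure.restrict_univ]
      exact hdalang.ne
    have htail : Tendsto (fun n : ℕ => ρ (Ici (n : ℝ))) atTop (𝓝 0) := by
      have h0 : ⋂ n : ℕ, Ici ((n : ℝ)) = ∅ := by
        ext x
        simp only [mem_iInter, mem_Ici, mem_empty_iff_false, iff_false, not_forall, not_le]
        obtain ⟨n, hn⟩ := exists_nat_gt x
        exact ⟨n, hn⟩
      have h1 := tendsto_measure_iInter_atTop (μ := ρ) (s := fun n : ℕ => Ici ((n : ℝ)))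
        (fun n => measurableSet_Ici.nullMeasurableSet)
        (fun a b hab => Ici_subset_Ici.2 (Nat.cast_le.2 hab))
        ⟨0, by
          refine ne_of_lt (lt_of_le_of_lt (measure_mono (subset_univ _)) ?_)
          exact lt_top_iff_ne_top.2 hρ_univ⟩
      rw [h0] at h1
      simp only [measure_empty] at h1
      exact h1
    clear_value s m Φ C ξ₀ ε₁
    -- main quantitative estimate
    have hmain : ∀ A : ℝ, 0 < A → ∀ᶠ T in (atTop : Filter ℝ), A ≤ ψ T / |T| := by
      intro A hA
      set δ : ℝ := 1 / (32 * C * A + 1) with hδ_def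
      have hδpos : 0 < δ := by positivity
      have hev : ∀ᶠ n : ℕ in atTop, ρ (Ici (n : ℝ)) < ENNReal.ofReal δ :=
        htail.eventually_lt_const (ENNReal.ofReal_pos.2 hδpos)
      obtain ⟨N, hN⟩ := eventually_atTop.1 hev
      have hNval : ρ (Ici ((N : ℝ))) < ENNReal.ofReal δ := hN N le_rfl
      filter_upwards [eventually_ge_atTop (max ξ₀ (max ((N : ℝ)) 1))] with T hT
      have hT1 : ξ₀ ≤ T := le_trans (le_max_left _ _) hT
      have hTN : (N : ℝ) ≤ T := le_trans (le_trans (le_max_left _ _) (le_max_right _ _)) hT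
      have hT1' : 1 ≤ T := le_trans (le_trans (le_max_right _ _) (le_max_right _ _)) hT
      have hT2 : 2 ≤ T := le_trans hξ₀2 hT1
      have hTpos : 0 < T := by linarith
      obtain ⟨D, hD_def⟩ : ∃ d : ℝ, d = 8 * C * (T ^ 2 * μr T) := ⟨_, rfl⟩
      have hD0 : 0 ≤ D := hD_def ▸
        mul_nonneg (by positivity) (mul_nonneg (sq_nonneg T) (hμr_nonneg T))
      have hDpos : 0 < 1 + D := by linarith
      have hbound : ∀ ξ ∈ Icc T (2 * T),
          ENNReal.ofReal (1 / (1 + D)) ≤ ENNReal.ofReal (1 / (1 + 2 * ψ ξ)) := by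
        intro ξ hξ
        have hψle : ψ ξ ≤ C * (ξ ^ 2 * μr ξ) := hkey_up ξ (le_trans hT1 hξ.1)
        have hμ : μr ξ ≤ μr T := hμr_mono hT2 hξ.1
        have hξpos : 0 < ξ := lt_of_lt_of_le hTpos hξ.1
        have hξ2 : ξ ^ 2 ≤ 4 * T ^ 2 := by nlinarith [hξ.1, hξ.2]
        have hψD : ψ ξ ≤ D / 2 := by
          have h9 : ξ ^ 2 * μr ξ ≤ 4 * T ^ 2 * μr T :=
            calc ξ ^ 2 * μr ξ ≤ 4 * T ^ 2 * μr ξ :=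
                mul_le_mul_of_nonneg_right hξ2 (hμr_nonneg ξ)
              _ ≤ 4 * T ^ 2 * μr T := by
                refine mul_le_mul_of_nonneg_left hμ (by positivity)
          calc ψ ξ ≤ C * (ξ ^ 2 * μr ξ) := hψle
            _ ≤ C * (4 * T ^ 2 * μr T) := mul_le_mul_of_nonneg_left h9 hC.le
            _ = D / 2 := by rw [hD_def]; ring
        refine ENNReal.ofReal_le_ofReal ?_
        have := hψ_nonneg ξ
        refine one_div_le_one_div_of_le (by linarith) (by linarith)
      have hchain : ENNReal.ofReal (1 / (1 + D)) * ENNReal.ofReal T < ENNReal.ofReal δ := by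
        have h8 : ENNReal.ofReal (1 / (1 + D)) * ENNReal.ofReal T
            ≤ ∫⁻ ξ in Icc T (2 * T), ENNReal.ofReal (1 / (1 + 2 * ψ ξ)) := by
          calc ENNReal.ofReal (1 / (1 + D)) * ENNReal.ofReal T
              = ∫⁻ _ in Icc T (2 * T), ENNReal.ofReal (1 / (1 + D)) ∂volume := by
                rw [setLIntegral_const, Real.volume_Icc, show 2 * T - T = T from by ring]
            _ ≤ _ := setLIntegral_mono hf_meas hbound
        have h9 : (∫⁻ ξ in Icc T (2 * T), ENNReal.ofReal (1 / (1 + 2 * ψ ξ))) ≤ ρ (Ici T) := by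
          rw [hρ_Ici]
          exact lintegral_mono_set Icc_subset_Ici_self
        exact lt_of_le_of_lt (h8.trans h9)
          (lt_of_le_of_lt (measure_mono (Ici_subset_Ici.2 hTN)) hNval)
      have hreal : T / (1 + D) < δ := by
        rw [← ENNReal.ofReal_mul (by positivity)] at hchain
        have h10 := (ENNReal.ofReal_lt_ofReal_iff hδpos).1 hchain
        calc T / (1 + D) = 1 / (1 + D) * T := by ring
          _ < δ := h10
      have hTμ : 4 * A ≤ T * μr T := by
        rw [hδ_def] at hreal
        have h11 : T * (32 * C * A + 1) < 1 * (1 + D) :=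
          (div_lt_div_iff₀ hDpos (by positivity)).1 hreal
        rw [hD_def] at h11
        nlinarith [h11, mul_pos (mul_pos (by norm_num : (0:ℝ) < 8) hC) hTpos,
          hμr_nonneg T, hT1', hA, hC, hTpos]
      rw [abs_of_pos hTpos, le_div_iff₀ hTpos]
      nlinarith [hkey_low T hTpos, hμr_nonneg T,
        mul_nonneg (sub_nonneg.2 hTμ) hTpos.le]
    -- conclusion
    have hatTop : Tendsto (fun ξ : ℝ => ψ ξ / |ξ|) atTop atTop := by
      rw [tendsto_atTop]
      intro b
      have hA : 0 < max b 1 := lt_of_lt_of_le one_pos (le_max_right _ _)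
      filter_upwards [hmain (max b 1) hA] with T hT
      exact le_trans (le_max_left _ _) hT
    have hatBot : Tendsto (fun ξ : ℝ => ψ ξ / |ξ|) atBot atTop := by
      have h12 := hatTop.comp tendsto_neg_atBot_atTop
      refine Tendsto.congr (fun ξ => ?_) h12
      show ψ (-ξ) / |(-ξ)| = ψ ξ / |ξ|
      rw [hψ_even, abs_neg]
    rw [cocompact_eq_atBot_atTop]
    exact tendsto_sup.2 ⟨hatBot, hatTop⟩
end

section
/- Let h : [0,∞) → [0,∞) be a measurable function such that ∫₀^∞ dz/(α + 2 h(z)) < ∞ for some α > 0. Then lim_{ξ→∞} ξ^{−2} ∫₀^ξ h(z) dz = ∞. -/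
open MeasureTheory Set Filter
open scoped ENNReal

/-- Cauchy–Schwarz: if `F * G = 1` a.e., then `μ(univ)² ≤ ∫F · ∫G`. -/
lemma cs_aux {μ : Measure ℝ} {F G : ℝ → ℝ≥0∞} (hF : Measurable F) (hG : Measurable G)
    (h1 : ∀ᵐ z ∂μ, F z * G z = 1) :
    μ univ * μ univ ≤ (∫⁻ z, F z ∂μ) * (∫⁻ z, G z ∂μ) := by
  have hpq : (2 : ℝ).HolderConjugate 2 := Real.HolderConjugate.two_two
  set f : ℝ → ℝ≥0∞ := fun z => F z ^ (2⁻¹ : ℝ) with hf_def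
  set g : ℝ → ℝ≥0∞ := fun z => G z ^ (2⁻¹ : ℝ) with hg_def
  have hf : Measurable f := hF.pow_const _
  have hg : Measurable g := hG.pow_const _
  have key := ENNReal.lintegral_mul_le_Lp_mul_Lq μ hpq hf.aemeasurable hg.aemeasurable
  have hfg : ∫⁻ z, (f * g) z ∂μ = μ univ := by
    rw [← lintegral_one]
    refine lintegral_congr_ae ?_
    filter_upwards [h1] with z hz
    simp only [Pi.mul_apply, hf_def, hg_def, ← ENNReal.mul_rpow_of_nonneg _ _ (by norm_num :
      (0:ℝ) ≤ 2⁻¹), hz, ENNReal.one_rpow]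
  have hf2 : ∀ z, f z ^ (2 : ℝ) = F z := by
    intro z
    rw [hf_def, ← ENNReal.rpow_mul]
    norm_num
  have hg2 : ∀ z, g z ^ (2 : ℝ) = G z := by
    intro z
    rw [hg_def, ← ENNReal.rpow_mul]
    norm_num
  simp only [hf2, hg2, hfg] at key
  have sq : ∀ x : ℝ≥0∞, x ^ ((1:ℝ)/2) * x ^ ((1:ℝ)/2) = x := by
    intro x
    rw [← pow_two, ← ENNReal.rpow_natCast, ← ENNReal.rpow_mul]
    norm_num
  calc μ univ * μ univ
      ≤ ((∫⁻ z, F z ∂μ) ^ ((1:ℝ)/2) * (∫⁻ z, G z ∂μ) ^ ((1:ℝ)/2)) *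
        ((∫⁻ z, F z ∂μ) ^ ((1:ℝ)/2) * (∫⁻ z, G z ∂μ) ^ ((1:ℝ)/2)) := mul_le_mul' key key
    _ = ((∫⁻ z, F z ∂μ) ^ ((1:ℝ)/2) * (∫⁻ z, F z ∂μ) ^ ((1:ℝ)/2)) *
        ((∫⁻ z, G z ∂μ) ^ ((1:ℝ)/2) * (∫⁻ z, G z ∂μ) ^ ((1:ℝ)/2)) := by ring
    _ = (∫⁻ z, F z ∂μ) * (∫⁻ z, G z ∂μ) := by rw [sq, sq]

/-- if `h : [0,∞) → [0,∞)` is measurable and `∫₀^∞ dz/(α + 2 h(z)) < ∞` for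
some `α > 0`, then `lim_{ξ→∞} ξ^{−2} ∫₀^ξ h(z) dz = ∞`. -/
theorem stmt_16 (h : ℝ → ℝ) (hmeas : Measurable h) (hnonneg : ∀ z ≥ (0 : ℝ), 0 ≤ h z)
    (α : ℝ) (hα : 0 < α)
    (hint : ∫⁻ z in Set.Ioi (0 : ℝ), ENNReal.ofReal (1 / (α + 2 * h z)) < ⊤) :
    Filter.Tendsto
      (fun ξ : ℝ => (∫⁻ z in Set.Ioc (0 : ℝ) ξ, ENNReal.ofReal (h z)) / ENNReal.ofReal (ξ ^ 2))
      Filter.atTop (nhds ⊤) := by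
  set G : ℝ → ℝ≥0∞ := fun z => ENNReal.ofReal (1 / (α + 2 * h z)) with hG_def
  have hGmeas : Measurable G :=
    ENNReal.measurable_ofReal.comp (measurable_const.div (measurable_const.add
      (hmeas.const_mul 2)))
  -- tail of the integral of G goes to 0
  have tail : ∀ ε : ℝ, 0 < ε → ∃ A : ℝ, 1 ≤ A ∧
      (∫⁻ z in Set.Ioi A, G z) ≤ ENNReal.ofReal ε := by
    intro ε hε
    set ν : Measure ℝ := (volume.restrict (Set.Ioi (0:ℝ))).withDensity G with hν_def
    have hν : ∀ s : Set ℝ, MeasurableSet s → ν s = ∫⁻ z in s, G z ∂(volume.restrict (Set.Ioi (0:ℝ))) :=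
      fun s hs => withDensity_apply G hs
    have hνuniv : ν univ = ∫⁻ z in Set.Ioi (0:ℝ), G z := by
      rw [hν univ MeasurableSet.univ, Measure.restrict_univ]
    have hfin : ν univ ≠ ⊤ := by rw [hνuniv]; exact hint.ne
    have hIoi : ∀ A : ℝ, 1 ≤ A → ν (Set.Ioi A) = ∫⁻ z in Set.Ioi A, G z := by
      intro A hA
      rw [hν _ measurableSet_Ioi, Measure.restrict_restrict measurableSet_Ioi,
        Set.inter_eq_left.2 (Set.Ioi_subset_Ioi (by linarith))]
    by_cases hle : ν univ ≤ ENNReal.ofReal ε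
    · exact ⟨1, le_refl 1, by rw [← hIoi 1 le_rfl]; exact le_trans (measure_mono (subset_univ _)) hle⟩
    · push_neg at hle
      have hδ : ν univ - ENNReal.ofReal ε < ν univ :=
        ENNReal.sub_lt_self hfin (fun H => by simp [H] at hle)
          (by simp [ENNReal.ofReal_eq_zero]; linarith)
      have hev := (hδ.trans_le le_rfl |> Filter.Tendsto.eventually_const_lt) (tendsto_measure_Iic_atTop ν)
      obtain ⟨A, hA1, hA2⟩ := (hev.and (eventually_ge_atTop (1:ℝ))).exists
      refine ⟨A, hA2, ?_⟩
      rw [← hIoi A hA2]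
      have hcompl : Set.Ioi A = (Set.Iic A)ᶜ := compl_Iic.symm
      rw [hcompl, measure_compl measurableSet_Iic
        (ne_top_of_le_ne_top hfin (measure_mono (subset_univ _)))]
      rw [tsub_le_iff_right]
      have H2 : ν univ - ENNReal.ofReal ε ≤ ν (Set.Iic A) := hA1.le
      rw [tsub_le_iff_left] at H2
      exact H2
  -- main argument
  refine ENNReal.tendsto_nhds_top fun n => ?_
  set c : ℝ := (n : ℝ) + 1 with hc_def
  have hc : 0 < c := by positivity
  set ε : ℝ := 1 / (4 * (2 * c + 1)) with hε_def
  have hεpos : 0 < ε := by positivity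
  obtain ⟨A, hA1, hA2⟩ := tail ε hεpos
  filter_upwards [eventually_ge_atTop (max (2 * A) (α / 2))] with ξ hξ
  have hξ2A : 2 * A ≤ ξ := le_trans (le_max_left _ _) hξ
  have hξα : α / 2 ≤ ξ := le_trans (le_max_right _ _) hξ
  have hξpos : 0 < ξ := by linarith
  set J := Set.Ioc (ξ / 2) ξ with hJ_def
  set μJ := volume.restrict J with hμJ_def
  have hvolJ : μJ univ = ENNReal.ofReal (ξ / 2) := by
    rw [hμJ_def, Measure.restrict_apply MeasurableSet.univ, Set.univ_inter, hJ_def,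
      Real.volume_Ioc]
    congr 1; ring
  set F : ℝ → ℝ≥0∞ := fun z => ENNReal.ofReal (α + 2 * h z) with hF_def
  have hFmeas : Measurable F :=
    ENNReal.measurable_ofReal.comp (measurable_const.add (hmeas.const_mul 2))
  have hae : ∀ᵐ z ∂μJ, F z * G z = 1 := by
    rw [hμJ_def, ae_restrict_iff' measurableSet_Ioc]
    refine ae_of_all _ fun z hz => ?_
    have hz0 : 0 ≤ z := le_trans (by linarith) hz.1.le
    have hd : 0 < α + 2 * h z := by have := hnonneg z hz0; linarith
    rw [hF_def, hG_def]
    rw [← ENNReal.ofReal_mul hd.le, mul_one_div, div_self hd.ne', ENNReal.ofReal_one]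
  have CS := cs_aux hFmeas hGmeas hae
  have hGsmall : (∫⁻ z, G z ∂μJ) ≤ ENNReal.ofReal ε := by
    refine le_trans (le_of_eq rfl) (le_trans (lintegral_mono_set ?_) hA2)
    intro z hz
    have : A ≤ ξ / 2 := by linarith
    exact lt_of_le_of_lt this hz.1
  have h1 : ENNReal.ofReal ((ξ / 2) ^ 2 / ε) * ENNReal.ofReal ε ≤
      (∫⁻ z, F z ∂μJ) * ENNReal.ofReal ε := by
    have e1 : ENNReal.ofReal ((ξ / 2) ^ 2 / ε) * ENNReal.ofReal ε
        = ENNReal.ofReal (ξ / 2) * ENNReal.ofReal (ξ / 2) := by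
      rw [← ENNReal.ofReal_mul (by positivity), div_mul_cancel₀ _ hεpos.ne',
        ← ENNReal.ofReal_mul (by positivity)]
      congr 1; ring
    rw [e1, ← hvolJ]
    exact le_trans CS (mul_le_mul_right hGsmall _)
  have h2 : ENNReal.ofReal ((ξ / 2) ^ 2 / ε) ≤ ∫⁻ z, F z ∂μJ :=
    (ENNReal.mul_le_mul_iff_left (by simp [hεpos]) ENNReal.ofReal_ne_top).1 h1
  set HJ := ∫⁻ z, ENNReal.ofReal (h z) ∂μJ with hHJ_def
  have hFsplit : (∫⁻ z, F z ∂μJ) = ENNReal.ofReal (α * (ξ / 2)) + 2 * HJ := by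
    have hcong : ∀ᵐ z ∂μJ, F z = ENNReal.ofReal α + 2 * ENNReal.ofReal (h z) := by
      rw [hμJ_def, ae_restrict_iff' measurableSet_Ioc]
      refine ae_of_all _ fun z hz => ?_
      have hz0 : 0 ≤ z := le_trans (by linarith) hz.1.le
      have hh := hnonneg z hz0
      simp only [hF_def]
      rw [ENNReal.ofReal_add hα.le (by positivity),
        ENNReal.ofReal_mul (by norm_num : (0:ℝ) ≤ 2)]
      norm_num
    rw [lintegral_congr_ae hcong, lintegral_add_left measurable_const,
      lintegral_const_mul _ (hmeas.ennreal_ofReal),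
      lintegral_const, hvolJ, ← ENNReal.ofReal_mul hα.le, hHJ_def]
  have hreal : α * (ξ / 2) + 2 * (c * ξ ^ 2) ≤ (ξ / 2) ^ 2 / ε := by
    have e2 : (ξ / 2) ^ 2 / ε = (2 * c + 1) * ξ ^ 2 := by
      rw [hε_def]; field_simp; ring
    rw [e2]; nlinarith
  have h3 : ENNReal.ofReal (α * (ξ / 2)) + ENNReal.ofReal (2 * (c * ξ ^ 2)) ≤
      ENNReal.ofReal (α * (ξ / 2)) + 2 * HJ := by
    rw [← ENNReal.ofReal_add (by positivity) (by positivity)]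
    exact le_trans (ENNReal.ofReal_le_ofReal hreal) (hFsplit ▸ h2)
  have h4 : ENNReal.ofReal (2 * (c * ξ ^ 2)) ≤ 2 * HJ :=
    (WithTop.add_le_add_iff_left ENNReal.ofReal_ne_top).1 h3
  have h5 : ENNReal.ofReal (c * ξ ^ 2) ≤ HJ := by
    rw [ENNReal.ofReal_mul (by norm_num : (0:ℝ) ≤ 2)] at h4
    have e3 : ENNReal.ofReal (2 : ℝ) = 2 := by norm_num
    rw [e3] at h4
    exact (ENNReal.mul_le_mul_iff_right (by norm_num) (by norm_num)).1 h4
  have h6 : ENNReal.ofReal (c * ξ ^ 2) ≤ ∫⁻ z in Set.Ioc (0:ℝ) ξ, ENNReal.ofReal (h z) := by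
    refine le_trans h5 (lintegral_mono_set ?_)
    exact Set.Ioc_subset_Ioc_left (by linarith)
  have hne0 : ENNReal.ofReal (ξ ^ 2) ≠ 0 := by
    simp only [ne_eq, ENNReal.ofReal_eq_zero, not_le]; positivity
  have h7 : ENNReal.ofReal c ≤
      (∫⁻ z in Set.Ioc (0:ℝ) ξ, ENNReal.ofReal (h z)) / ENNReal.ofReal (ξ ^ 2) := by
    rw [ENNReal.le_div_iff_mul_le (Or.inl hne0) (Or.inl ENNReal.ofReal_ne_top),
      ← ENNReal.ofReal_mul hc.le]
    exact h6
  refine lt_of_lt_of_le ?_ h7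
  rw [hc_def, ← ENNReal.ofReal_natCast n]
  exact ENNReal.ofReal_lt_ofReal_iff (by positivity) |>.2 (by linarith)
end

section
/- Let ν be a Borel measure on ℝ with ν({0}) = 0 and ∫ min(x², 1) ν(dx) < ∞, and define ψ(ξ) := ∫_ℝ (1 − cos(xξ)) ν(dx). Then there exists a constant C > 0 (independent of ν) such that for every ξ > 0: ψ(ξ) ≤ C · ξ^{−1} ∫₀^ξ ψ(z) dz. -/
open MeasureTheory Set Filter
open scoped ENNReal

private lemma stmt18_aux_mono {f : ℝ → ℝ} (hf : Differentiable ℝ f)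
    (hd : ∀ x, 0 ≤ x → 0 ≤ deriv f x) {θ : ℝ} (hθ : 0 ≤ θ) : f 0 ≤ f θ := by
  have := monotoneOn_of_deriv_nonneg (convex_Ici (0:ℝ)) hf.continuous.continuousOn
    (hf.differentiableOn) (fun x hx => hd x (le_of_lt (by simpa [interior_Ici] using hx)))
  exact this (Set.self_mem_Ici) hθ hθ

private lemma stmt18_sin_ge_cubed {θ : ℝ} (hθ : 0 ≤ θ) : θ - θ^3/6 ≤ Real.sin θ := by
  have h := stmt18_aux_mono (f := fun x => Real.sin x - x + x^3/6) (by fun_prop)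
    (fun x hx => ?_) hθ
  · simp at h; linarith
  · have hd : HasDerivAt (fun x => Real.sin x - x + x^3/6) (Real.cos x - 1 + x^2/2) x := by
      have := ((Real.hasDerivAt_sin x).sub (hasDerivAt_id x)).add ((hasDerivAt_pow 3 x).div_const 6)
      exact this.congr_deriv (by push_cast; ring)
    rw [hd.deriv]
    nlinarith [Real.one_sub_sq_div_two_le_cos (x := x)]

private lemma stmt18_cos_le_quartic {θ : ℝ} (hθ : 0 ≤ θ) : Real.cos θ ≤ 1 - θ^2/2 + θ^4/24 := by
  have h := stmt18_aux_mono (f := fun x => 1 - x^2/2 + x^4/24 - Real.cos x) (by fun_prop)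
    (fun x hx => ?_) hθ
  · simp at h; linarith
  · have hd : HasDerivAt (fun x => 1 - x^2/2 + x^4/24 - Real.cos x) (-x + x^3/6 + Real.sin x) x := by
      have := (((hasDerivAt_const x (1:ℝ)).sub ((hasDerivAt_pow 2 x).div_const 2)).add
        ((hasDerivAt_pow 4 x).div_const 24)).sub (Real.hasDerivAt_cos x)
      exact this.congr_deriv (by push_cast; ring)
    rw [hd.deriv]
    nlinarith [stmt18_sin_ge_cubed hx]

private lemma stmt18_sin_le_quintic {θ : ℝ} (hθ : 0 ≤ θ) :
    Real.sin θ ≤ θ - θ^3/6 + θ^5/120 := by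
  have h := stmt18_aux_mono (f := fun x => x - x^3/6 + x^5/120 - Real.sin x) (by fun_prop)
    (fun x hx => ?_) hθ
  · simp at h; linarith
  · have hd : HasDerivAt (fun x => x - x^3/6 + x^5/120 - Real.sin x)
      (1 - x^2/2 + x^4/24 - Real.cos x) x := by
      have := (((hasDerivAt_id x).sub ((hasDerivAt_pow 3 x).div_const 6)).add
        ((hasDerivAt_pow 5 x).div_const 120)).sub (Real.hasDerivAt_sin x)
      exact this.congr_deriv (by push_cast; ring)
    rw [hd.deriv]
    nlinarith [stmt18_cos_le_quartic hx]

/-- The universal pointwise inequality `1 - cos θ ≤ 6 (1 - sin θ / θ)`. -/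
private lemma stmt18_key_ineq {θ : ℝ} (hθ : θ ≠ 0) :
    1 - Real.cos θ ≤ 6 * (1 - Real.sin θ / θ) := by
  wlog hpos : 0 < θ generalizing θ
  · have h := this (θ := -θ) (by simpa using hθ)
      (by cases (hθ.lt_or_gt) <;> [linarith; exact absurd ‹0 < θ› hpos])
    simpa [neg_div_neg_eq] using h
  rcases le_or_gt θ 2 with h2 | h2
  · have hs := stmt18_sin_le_quintic hpos.le
    have hc := Real.one_sub_sq_div_two_le_cos (x := θ)
    have hq : Real.sin θ / θ ≤ 1 - θ^2/6 + θ^4/120 := by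
      rw [div_le_iff₀ hpos]; nlinarith
    nlinarith [sq_nonneg θ, mul_nonneg (sq_nonneg θ) (show (0:ℝ) ≤ 4 - θ^2 by nlinarith)]
  · have hs : Real.sin θ ≤ 1 := Real.sin_le_one θ
    have : Real.sin θ / θ ≤ 1/2 := by
      rw [div_le_iff₀ hpos]; nlinarith
    nlinarith [Real.neg_one_le_cos θ]

private lemma stmt18_pt_bound (x z : ℝ) :
    1 - Real.cos (x * z) ≤ max (z^2) 2 * min (x^2) 1 := by
  rcases le_or_gt (x^2) 1 with h | h
  · have := Real.one_sub_sq_div_two_le_cos (x := x * z)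
    have h1 : z^2 ≤ max (z^2) 2 := le_max_left _ _
    rw [min_eq_left h]
    nlinarith [sq_nonneg x, sq_nonneg z, mul_pow x z 2]
  · rw [min_eq_right h.le]
    have : (2:ℝ) ≤ max (z^2) 2 := le_max_right _ _
    nlinarith [Real.neg_one_le_cos (x * z)]

private lemma stmt18_sigmaFinite {ν : Measure ℝ} (h0 : ν {0} = 0)
    (hfin : (∫⁻ x : ℝ, ENNReal.ofReal (min (x ^ 2) 1) ∂ν) < ⊤) :
    SigmaFinite ν := by
  have hm : Measurable fun x : ℝ => ENNReal.ofReal (min (x ^ 2) 1) := by fun_prop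
  apply Measure.sigmaFinite_of_countable
    (S := Set.range (fun n : ℕ => {x : ℝ | ((n:ℝ)+1)⁻¹ ≤ |x|} ∪ {0}))
    (Set.countable_range _)
  · rintro s ⟨n, rfl⟩
    have hc : (0:ℝ) < min (((n:ℝ)+1)⁻¹^2) 1 := by positivity
    have hsub : {x : ℝ | ((n:ℝ)+1)⁻¹ ≤ |x|} ⊆
        {x : ℝ | ENNReal.ofReal (min (((n:ℝ)+1)⁻¹^2) 1) ≤ ENNReal.ofReal (min (x ^ 2) 1)} := by
      intro x hx
      simp only [Set.mem_setOf_eq] at hx ⊢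
      apply ENNReal.ofReal_le_ofReal
      have h1 : ((n:ℝ)+1)⁻¹^2 ≤ x^2 := by
        have := pow_le_pow_left₀ (by positivity) hx 2
        nlinarith [sq_abs x]
      exact min_le_min h1 le_rfl
    have hν : ν {x : ℝ | ((n:ℝ)+1)⁻¹ ≤ |x|} < ⊤ := by
      refine lt_of_le_of_lt (measure_mono hsub) (lt_of_le_of_lt
        (meas_ge_le_lintegral_div hm.aemeasurable (by simp [hc]; positivity) (by simp)) ?_)
      exact ENNReal.div_lt_top hfin.ne (by simp [hc]; positivity)
    calc ν _ ≤ ν {x : ℝ | ((n:ℝ)+1)⁻¹ ≤ |x|} + ν {0} := measure_union_le _ _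
    _ < ⊤ := by rw [h0]; simpa using hν
  · apply Set.eq_univ_of_forall
    intro x
    rcases eq_or_ne x 0 with rfl | hx
    · exact ⟨_, ⟨0, rfl⟩, Or.inr rfl⟩
    · obtain ⟨n, hn⟩ := exists_nat_gt (|x|⁻¹)
      refine ⟨_, ⟨n, rfl⟩, Or.inl ?_⟩
      have hax : 0 < |x| := abs_pos.2 hx
      rw [Set.mem_setOf_eq, inv_le_comm₀ (by positivity) hax]
      exact le_trans hn.le (by linarith)

/-- there is a universal constant `C > 0` (independent of the Lévy measure `ν`)
such that `ψ(ξ) ≤ C · ξ⁻¹ ∫₀^ξ ψ(z) dz` for all `ξ > 0`, where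
`ψ(ξ) = ∫ (1 − cos(xξ)) ν(dx)`. -/
theorem stmt_18 : ∃ C > (0 : ℝ), ∀ (ν : Measure ℝ), ν {0} = 0 →
    (∫⁻ x : ℝ, ENNReal.ofReal (min (x ^ 2) 1) ∂ν) < ⊤ →
    ∀ ξ > (0 : ℝ),
      (∫⁻ x : ℝ, ENNReal.ofReal (1 - Real.cos (x * ξ)) ∂ν).toReal ≤
        C * (ξ⁻¹ * ∫ z in Set.Ioc (0 : ℝ) ξ,
          (∫⁻ x : ℝ, ENNReal.ofReal (1 - Real.cos (x * z)) ∂ν).toReal) := by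
  refine ⟨6, by norm_num, ?_⟩
  intro ν h0 hfin ξ hξ
  haveI : SigmaFinite ν := stmt18_sigmaFinite h0 hfin
  set M := ∫⁻ x : ℝ, ENNReal.ofReal (min (x ^ 2) 1) ∂ν with hM
  have hae : ∀ᵐ x ∂ν, x ≠ 0 := by
    rw [ae_iff]
    simpa only [ne_eq, not_not, Set.setOf_eq_eq_singleton] using h0
  set F : ℝ → ℝ≥0∞ := fun z => ∫⁻ x : ℝ, ENNReal.ofReal (1 - Real.cos (x * z)) ∂ν with hF
  have hFb : ∀ z, F z ≤ ENNReal.ofReal (max (z^2) 2) * M := by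
    intro z
    rw [hF, hM, ← lintegral_const_mul' _ _ ENNReal.ofReal_ne_top]
    apply lintegral_mono
    intro x
    simp only []
    rw [← ENNReal.ofReal_mul (by positivity)]
    exact ENNReal.ofReal_le_ofReal (stmt18_pt_bound x z)
  have hFlt : ∀ z, F z < ⊤ := fun z =>
    lt_of_le_of_lt (hFb z) (ENNReal.mul_lt_top ENNReal.ofReal_lt_top hfin)
  have hFmeas : Measurable F := by
    apply Measurable.lintegral_prod_right (f := fun z x => ENNReal.ofReal (1 - Real.cos (x * z)))
    fun_prop
  set L := ∫⁻ z in Set.Ioc (0:ℝ) ξ, F z with hL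
  have hswap : L = ∫⁻ x : ℝ, (∫⁻ z in Set.Ioc (0:ℝ) ξ, ENNReal.ofReal (1 - Real.cos (x * z))) ∂ν := by
    rw [hL, hF]
    apply lintegral_lintegral_swap
    apply Measurable.aemeasurable
    fun_prop
  have hinner : ∀ x : ℝ, x ≠ 0 →
      (∫⁻ z in Set.Ioc (0:ℝ) ξ, ENNReal.ofReal (1 - Real.cos (x * z))) =
        ENNReal.ofReal (ξ - Real.sin (x * ξ) / x) := by
    intro x hx
    have hint : IntegrableOn (fun z => 1 - Real.cos (x * z)) (Set.Ioc (0:ℝ) ξ) :=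
      Continuous.integrableOn_Ioc (by fun_prop)
    rw [← ofReal_integral_eq_lintegral_ofReal hint
      (ae_of_all _ fun z => by simp [sub_nonneg, Real.cos_le_one])]
    congr 1
    rw [← intervalIntegral.integral_of_le hξ.le]
    have h1 : ∫ z in (0:ℝ)..ξ, (1 - Real.cos (x * z)) =
        (∫ z in (0:ℝ)..ξ, (1:ℝ)) - ∫ z in (0:ℝ)..ξ, Real.cos (x * z) := by
      apply intervalIntegral.integral_sub intervalIntegrable_const
      exact (Continuous.intervalIntegrable (by fun_prop) _ _)
    rw [h1, intervalIntegral.integral_comp_mul_left (fun u => Real.cos u) hx]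
    simp [integral_cos, smul_eq_mul, mul_comm, div_eq_inv_mul]
  have hJ : ∫⁻ x : ℝ, ENNReal.ofReal (ξ - Real.sin (x * ξ) / x) ∂ν = L := by
    rw [hswap]
    exact lintegral_congr_ae (hae.mono fun x hx => (hinner x hx).symm)
  have hG : ∀ x : ℝ, x ≠ 0 → ENNReal.ofReal (1 - Real.cos (x * ξ)) ≤
      ENNReal.ofReal (6 * ξ⁻¹) * ENNReal.ofReal (ξ - Real.sin (x * ξ) / x) := by
    intro x hx
    rw [← ENNReal.ofReal_mul (by positivity)]
    apply ENNReal.ofReal_le_ofReal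
    have hθ : x * ξ ≠ 0 := mul_ne_zero hx hξ.ne'
    have hk := stmt18_key_ineq hθ
    have heq : 6 * ξ⁻¹ * (ξ - Real.sin (x * ξ) / x) = 6 * (1 - Real.sin (x * ξ) / (x * ξ)) := by
      field_simp
    rw [heq]; exact hk
  have hFle : F ξ ≤ ENNReal.ofReal (6 * ξ⁻¹) * L := by
    calc F ξ ≤ ∫⁻ x : ℝ, ENNReal.ofReal (6 * ξ⁻¹) *
        ENNReal.ofReal (ξ - Real.sin (x * ξ) / x) ∂ν :=
      lintegral_mono_ae (hae.mono fun x hx => hG x hx)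
    _ = ENNReal.ofReal (6 * ξ⁻¹) *
        ∫⁻ x : ℝ, ENNReal.ofReal (ξ - Real.sin (x * ξ) / x) ∂ν :=
      lintegral_const_mul' _ _ ENNReal.ofReal_ne_top
    _ = _ := by rw [hJ]
  have hLlt : L < ⊤ := by
    have hb : ∀ z ∈ Set.Ioc (0:ℝ) ξ, F z ≤ ENNReal.ofReal (max (ξ^2) 2) * M := by
      intro z hz
      refine le_trans (hFb z) (mul_le_mul_left (ENNReal.ofReal_le_ofReal ?_) _)
      have hz2 : z^2 ≤ ξ^2 := by nlinarith [hz.1, hz.2]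
      exact max_le_max hz2 le_rfl
    calc L ≤ ∫⁻ _ in Set.Ioc (0:ℝ) ξ, ENNReal.ofReal (max (ξ^2) 2) * M :=
      setLIntegral_mono measurable_const hb
    _ = ENNReal.ofReal (max (ξ^2) 2) * M * volume (Set.Ioc (0:ℝ) ξ) := by
      simp [lintegral_const]
    _ < ⊤ := by
      apply ENNReal.mul_lt_top (ENNReal.mul_lt_top ENNReal.ofReal_lt_top hfin)
      simp [Real.volume_Ioc]
  have hI : ∫ z in Set.Ioc (0:ℝ) ξ, (F z).toReal = L.toReal := by
    rw [hL]
    exact integral_toReal hFmeas.aemeasurable (ae_of_all _ hFlt)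
  show (F ξ).toReal ≤ 6 * (ξ⁻¹ * ∫ z in Set.Ioc (0:ℝ) ξ, (F z).toReal)
  rw [hI]
  calc (F ξ).toReal ≤ (ENNReal.ofReal (6 * ξ⁻¹) * L).toReal := by
        apply ENNReal.toReal_mono _ hFle
        exact (ENNReal.mul_lt_top ENNReal.ofReal_lt_top hLlt).ne
  _ = 6 * (ξ⁻¹ * L.toReal) := by
        rw [ENNReal.toReal_mul, ENNReal.toReal_ofReal (by positivity)]
        ring
end
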